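/- arXiv:1608.00709 — 5 statements merged into one kernel-verified Lean document; each statement's English description precedes it below -/
import Mathlib

section
/- If Γ₁ is a subgroup of finite index in a group Γ₂ and Γ₁ is Jordan with weak Jordan constant J̄(Γ₁), then Γ₂ is Jordan and J̄(Γ₂) ≤ [Γ₂ : Γ₁] · J̄(Γ₁). -/
/-- `J` is a weak Jordan bound for `Γ`: every finite subgroup contains an abelian
subgroup of index at most `J`. -/
def WeakJordanBound (Γ : Type*) [Group Γ] (J : ℕ) : Prop :=
  ∀ G : Subgroup Γ, Finite G →
    ∃ A : Subgroup Γ, A ≤ G ∧ IsMulCommutative A ∧ A.relIndex G ≤ J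

/-- `J` is a Jordan bound for `Γ`: every finite subgroup contains a normal abelian
subgroup of index at most `J`. -/
def JordanBound (Γ : Type*) [Group Γ] (J : ℕ) : Prop :=
  ∀ G : Subgroup Γ, Finite G →
    ∃ A : Subgroup Γ, A ≤ G ∧ IsMulCommutative A ∧ (A.subgroupOf G).Normal ∧ A.relIndex G ≤ J

/-- A group is Jordan if it admits some Jordan bound. -/
def JordanGroup (Γ : Type*) [Group Γ] : Prop := ∃ J, JordanBound Γ J

/-- The weak Jordan constant: the least weak Jordan bound. -/
noncomputable def weakJordanConst (Γ : Type*) [Group Γ] : ℕ :=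
  sInf {J | WeakJordanBound Γ J}

theorem isCommutative_of_le {G : Type*} [Group G] {A B : Subgroup G} (h : B ≤ A)
    (hA : IsMulCommutative A) : IsMulCommutative B := by
  constructor; constructor
  intro a b
  have hc := hA.is_comm.comm (⟨a.1, h a.2⟩ : A) (⟨b.1, h b.2⟩ : A)
  exact Subtype.ext (show ((a : G) * b = (b : G) * a) from congrArg Subtype.val hc)

theorem index_normalCore_le_factorial {G : Type*} [Group G] [Finite G] (H : Subgroup G) :
    H.normalCore.index ≤ Nat.factorial H.index := by
  have : Finite (G ⧸ H) := Quotient.finite _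
  have := Fintype.ofFinite (G ⧸ H)
  have : DecidableEq (G ⧸ H) := Classical.decEq _
  rw [Subgroup.normalCore_eq_ker, Subgroup.index_ker]
  calc Nat.card (MulAction.toPermHom G (G ⧸ H)).range
      ≤ Nat.card (Equiv.Perm (G ⧸ H)) :=
        Nat.card_le_card_of_injective _ Subtype.val_injective
    _ = Nat.factorial (Nat.card (G ⧸ H)) := by
        rw [Nat.card_eq_fintype_card, Fintype.card_perm, Nat.card_eq_fintype_card]
    _ = Nat.factorial H.index := rfl

theorem jordanBound_of_weak {Γ : Type*} [Group Γ] {J : ℕ} (h : WeakJordanBound Γ J) :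
    JordanBound Γ (Nat.factorial J) := by
  intro G hG
  obtain ⟨A, hAG, hAcomm, hrel⟩ := h G hG
  haveI := hAcomm
  have hback : ((A.subgroupOf G).normalCore.map G.subtype).subgroupOf G
      = (A.subgroupOf G).normalCore :=
    Subgroup.comap_map_eq_self_of_injective G.subtype_injective _
  refine ⟨((A.subgroupOf G).normalCore).map G.subtype, Subgroup.map_subtype_le _, ?_, ?_, ?_⟩
  · have hc : IsMulCommutative (A.subgroupOf G).normalCore :=
      isCommutative_of_le (Subgroup.normalCore_le _) inferInstance
    haveI := hc
    infer_instance
  · rw [hback]; infer_instance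
  · rw [Subgroup.relIndex, hback]
    calc (A.subgroupOf G).normalCore.index ≤ Nat.factorial (A.subgroupOf G).index :=
          index_normalCore_le_factorial _
      _ ≤ Nat.factorial J := Nat.factorial_le hrel

theorem weakJordan_of_finiteIndex_subgroup {Γ₂ : Type*} [Group Γ₂] (Γ₁ : Subgroup Γ₂)
    (hfin : Γ₁.index ≠ 0) (hJ : JordanGroup Γ₁) :
    JordanGroup Γ₂ ∧ weakJordanConst Γ₂ ≤ Γ₁.index * weakJordanConst Γ₁ := by
  obtain ⟨J₀, hJ₀⟩ := hJ
  have hne : {J | WeakJordanBound ↥Γ₁ J}.Nonempty :=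
    ⟨J₀, fun G hG => by
      obtain ⟨A, h1, h2, _, h4⟩ := hJ₀ G hG
      exact ⟨A, h1, h2, h4⟩⟩
  have hwk : WeakJordanBound ↥Γ₁ (weakJordanConst ↥Γ₁) := Nat.sInf_mem hne
  have key : WeakJordanBound Γ₂ (Γ₁.index * weakJordanConst ↥Γ₁) := by
    intro G hG
    have hfinH : Finite (G.subgroupOf Γ₁) := by
      refine Finite.of_injective (fun x => (⟨(x.1 : Γ₂), x.2⟩ : G)) ?_
      intro x y hxy
      simp only [Subtype.mk.injEq] at hxy
      exact Subtype.ext (Subtype.ext (Subtype.mk.inj hxy))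
    obtain ⟨A₁, hA₁le, hA₁comm, hA₁rel⟩ := hwk (G.subgroupOf Γ₁) hfinH
    haveI := hA₁comm
    refine ⟨A₁.map Γ₁.subtype, ?_, inferInstance, ?_⟩
    · have := Subgroup.map_mono (f := Γ₁.subtype) hA₁le
      rw [Subgroup.subgroupOf_map_subtype] at this
      exact this.trans inf_le_left
    · have hAle : A₁.map Γ₁.subtype ≤ Γ₁ ⊓ G := by
        have := Subgroup.map_mono (f := Γ₁.subtype) hA₁le
        rw [Subgroup.subgroupOf_map_subtype] at this
        rw [inf_comm]
        exact this
      have hback : (A₁.map Γ₁.subtype).subgroupOf Γ₁ = A₁ :=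
        Subgroup.comap_map_eq_self_of_injective Γ₁.subtype_injective _
      have h1 : (A₁.map Γ₁.subtype).relIndex (Γ₁ ⊓ G) ≤ weakJordanConst ↥Γ₁ := by
        have hsub : (Γ₁ ⊓ G).subgroupOf Γ₁ = G.subgroupOf Γ₁ := by
          rw [inf_comm, Subgroup.inf_subgroupOf_right]
        have := Subgroup.relIndex_subgroupOf
          (H := A₁.map Γ₁.subtype) (K := Γ₁ ⊓ G) (L := Γ₁) inf_le_left
        rw [hback, hsub] at this
        rw [← this]
        exact hA₁rel
      have h2 : (Γ₁ ⊓ G).relIndex G ≤ Γ₁.index := by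
        rw [Subgroup.inf_relIndex_right]
        have : Γ₁.relIndex ⊤ ≠ 0 := by rwa [Subgroup.relIndex_top_right]
        calc Γ₁.relIndex G ≤ Γ₁.relIndex ⊤ := Subgroup.relIndex_le_of_le_right le_top this
          _ = Γ₁.index := Γ₁.relIndex_top_right
      calc (A₁.map Γ₁.subtype).relIndex G
          = (A₁.map Γ₁.subtype).relIndex (Γ₁ ⊓ G) * (Γ₁ ⊓ G).relIndex G :=
            (Subgroup.relIndex_mul_relIndex _ _ _ hAle inf_le_right).symm
        _ ≤ weakJordanConst ↥Γ₁ * Γ₁.index := Nat.mul_le_mul h1 h2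
        _ = Γ₁.index * weakJordanConst ↥Γ₁ := Nat.mul_comm _ _
  exact ⟨⟨_, jordanBound_of_weak key⟩, Nat.sInf_le key⟩
end

section
/- If Δ₁ and Δ₂ are Jordan groups, then the product Δ₁ × Δ₂ is Jordan and its weak Jordan constant satisfies J̄(Δ₁ × Δ₂) = J̄(Δ₁) · J̄(Δ₂). -/
/-- The Jordan constant: the least Jordan bound. -/
noncomputable def jordanConst (Γ : Type*) [Group Γ] : ℕ :=
  sInf {J | JordanBound Γ J}

section Aux

variable {Γ : Type*} [Group Γ]

lemma aux_finite_of_le {A G : Subgroup Γ} [Finite G] (h : A ≤ G) : Finite A :=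
  Finite.of_injective (Set.inclusion h) (Set.inclusion_injective h)

lemma aux_finite_map {Γ' : Type*} [Group Γ'] (G : Subgroup Γ) [Finite G] (f : Γ →* Γ') :
    Finite (G.map f) := by
  apply Finite.of_surjective (fun g : G => (⟨f g.1, ⟨g.1, g.2, rfl⟩⟩ : G.map f))
  rintro ⟨x, g, hg, rfl⟩
  exact ⟨⟨g, hg⟩, rfl⟩

lemma aux_card_subgroupOf {A G : Subgroup Γ} (h : A ≤ G) :
    Nat.card (A.subgroupOf G) = Nat.card A :=
  Nat.card_congr (Subgroup.subgroupOfEquivOfLe h).toEquiv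

lemma aux_relIndex_mul_card {A G : Subgroup Γ} [Finite G] (h : A ≤ G) :
    A.relIndex G * Nat.card A = Nat.card G := by
  rw [Subgroup.relIndex, ← aux_card_subgroupOf h]
  exact Subgroup.index_mul_card _

lemma aux_card_pos (G : Subgroup Γ) [Finite G] : 0 < Nat.card G :=
  Nat.card_pos

lemma aux_relIndex_ne_zero {A G : Subgroup Γ} [Finite G] (h : A ≤ G) :
    A.relIndex G ≠ 0 := by
  intro h0
  have := aux_relIndex_mul_card h
  rw [h0, zero_mul] at this
  exact (aux_card_pos G).ne' this.symm

lemma aux_zero_not_weak : ¬ WeakJordanBound Γ 0 := by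
  intro h
  obtain ⟨A, hA, -, hr⟩ := h ⊥ inferInstance
  exact aux_relIndex_ne_zero hA (Nat.le_zero.mp hr)

end Aux

section Prod

variable {Δ₁ Δ₂ : Type*} [Group Δ₁] [Group Δ₂]

lemma aux_card_prod (H : Subgroup Δ₁) (K : Subgroup Δ₂) :
    Nat.card (H.prod K) = Nat.card H * Nat.card K := by
  rw [Nat.card_congr (H.prodEquiv K).toEquiv, Nat.card_prod]

lemma aux_finite_prod (H : Subgroup Δ₁) (K : Subgroup Δ₂) [Finite H] [Finite K] :
    Finite (H.prod K) :=
  Finite.of_equiv _ (H.prodEquiv K).toEquiv.symm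

lemma aux_le_prod_maps (G : Subgroup (Δ₁ × Δ₂)) :
    G ≤ (G.map (MonoidHom.fst Δ₁ Δ₂)).prod (G.map (MonoidHom.snd Δ₁ Δ₂)) := by
  intro g hg
  exact Subgroup.mem_prod.mpr ⟨⟨g, hg, rfl⟩, ⟨g, hg, rfl⟩⟩

/-- Key counting: relIndex of a product in a product. -/
lemma aux_relIndex_prod {A₁ G₁ : Subgroup Δ₁} {A₂ G₂ : Subgroup Δ₂} [Finite G₁] [Finite G₂]
    (h₁ : A₁ ≤ G₁) (h₂ : A₂ ≤ G₂) :
    (A₁.prod A₂).relIndex (G₁.prod G₂) = A₁.relIndex G₁ * A₂.relIndex G₂ := by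
  haveI := aux_finite_prod G₁ G₂
  have hP : A₁.prod A₂ ≤ G₁.prod G₂ := Subgroup.prod_mono h₁ h₂
  have e1 := aux_relIndex_mul_card hP
  have e2 := aux_relIndex_mul_card h₁
  have e3 := aux_relIndex_mul_card h₂
  have hc : 0 < Nat.card (A₁.prod A₂) := by
    rcases Nat.eq_zero_or_pos (Nat.card (A₁.prod A₂)) with h | h
    · rw [h, mul_zero] at e1; exact absurd e1.symm (aux_card_pos _).ne'
    · exact h
  apply Nat.eq_of_mul_eq_mul_right hc
  rw [e1, aux_card_prod, aux_card_prod A₁ A₂]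
  rw [← e2, ← e3]; ring

/-- Upper bound: the product of weak Jordan bounds is a weak Jordan bound for the product. -/
lemma aux_weak_prod {J₁ J₂ : ℕ} (b₁ : WeakJordanBound Δ₁ J₁) (b₂ : WeakJordanBound Δ₂ J₂) :
    WeakJordanBound (Δ₁ × Δ₂) (J₁ * J₂) := by
  intro G hG
  set G₁ := G.map (MonoidHom.fst Δ₁ Δ₂) with hG₁
  set G₂ := G.map (MonoidHom.snd Δ₁ Δ₂) with hG₂
  haveI : Finite G₁ := aux_finite_map G _
  haveI : Finite G₂ := aux_finite_map G _
  obtain ⟨A₁, hA₁, hc₁, hr₁⟩ := b₁ G₁ inferInstance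
  obtain ⟨A₂, hA₂, hc₂, hr₂⟩ := b₂ G₂ inferInstance
  refine ⟨(A₁.prod A₂) ⊓ G, inf_le_right, ?_, ?_⟩
  · haveI := hc₁; haveI := hc₂
    constructor; constructor
    intro a b
    apply Subtype.ext
    have ha : (a : Δ₁ × Δ₂) ∈ A₁.prod A₂ := a.2.1
    have hb : (b : Δ₁ × Δ₂) ∈ A₁.prod A₂ := b.2.1
    rw [Subgroup.mem_prod] at ha hb
    show (a : Δ₁ × Δ₂) * b = b * a
    ext
    · exact Subgroup.mul_comm_of_mem_isMulCommutative (H := A₁) ha.1 hb.1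
    · exact Subgroup.mul_comm_of_mem_isMulCommutative (H := A₂) ha.2 hb.2
  · rw [Subgroup.inf_relIndex_right]
    calc (A₁.prod A₂).relIndex G
        ≤ (A₁.prod A₂).relIndex (G₁.prod G₂) := by
          apply Subgroup.relIndex_le_of_le_right (aux_le_prod_maps G)
          rw [aux_relIndex_prod hA₁ hA₂]
          haveI := aux_finite_prod G₁ G₂
          exact Nat.mul_ne_zero (aux_relIndex_ne_zero hA₁) (aux_relIndex_ne_zero hA₂)
      _ = A₁.relIndex G₁ * A₂.relIndex G₂ := aux_relIndex_prod hA₁ hA₂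
      _ ≤ J₁ * J₂ := Nat.mul_le_mul hr₁ hr₂

/-- Upper bound, normal version. -/
lemma aux_jordan_prod {J₁ J₂ : ℕ} (b₁ : JordanBound Δ₁ J₁) (b₂ : JordanBound Δ₂ J₂) :
    JordanBound (Δ₁ × Δ₂) (J₁ * J₂) := by
  intro G hG
  set G₁ := G.map (MonoidHom.fst Δ₁ Δ₂) with hG₁
  set G₂ := G.map (MonoidHom.snd Δ₁ Δ₂) with hG₂
  haveI : Finite G₁ := aux_finite_map G _
  haveI : Finite G₂ := aux_finite_map G _
  obtain ⟨A₁, hA₁, hc₁, hn₁, hr₁⟩ := b₁ G₁ inferInstance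
  obtain ⟨A₂, hA₂, hc₂, hn₂, hr₂⟩ := b₂ G₂ inferInstance
  refine ⟨(A₁.prod A₂) ⊓ G, inf_le_right, ?_, ?_, ?_⟩
  · haveI := hc₁; haveI := hc₂
    constructor; constructor
    intro a b
    apply Subtype.ext
    have ha : (a : Δ₁ × Δ₂) ∈ A₁.prod A₂ := a.2.1
    have hb : (b : Δ₁ × Δ₂) ∈ A₁.prod A₂ := b.2.1
    rw [Subgroup.mem_prod] at ha hb
    show (a : Δ₁ × Δ₂) * b = b * a
    ext
    · exact Subgroup.mul_comm_of_mem_isMulCommutative (H := A₁) ha.1 hb.1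
    · exact Subgroup.mul_comm_of_mem_isMulCommutative (H := A₂) ha.2 hb.2
  · constructor
    intro a ha g
    rw [Subgroup.mem_subgroupOf] at ha ⊢
    have haP : ((a : ↥G) : Δ₁ × Δ₂) ∈ A₁.prod A₂ := (Subgroup.mem_inf.mp ha).1
    rw [Subgroup.mem_prod] at haP
    refine Subgroup.mem_inf.mpr ⟨Subgroup.mem_prod.mpr ⟨?_, ?_⟩,
      (G.mul_mem (G.mul_mem g.2 a.2) (G.inv_mem g.2))⟩
    · have hgm : (g : Δ₁ × Δ₂).1 ∈ G₁ := ⟨g, g.2, rfl⟩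
      have := hn₁.conj_mem ⟨(a : Δ₁ × Δ₂).1, ⟨a, a.2, rfl⟩⟩
        (Subgroup.mem_subgroupOf.mpr haP.1) ⟨(g : Δ₁ × Δ₂).1, hgm⟩
      rw [Subgroup.mem_subgroupOf] at this
      exact this
    · have hgm : (g : Δ₁ × Δ₂).2 ∈ G₂ := ⟨g, g.2, rfl⟩
      have := hn₂.conj_mem ⟨(a : Δ₁ × Δ₂).2, ⟨a, a.2, rfl⟩⟩
        (Subgroup.mem_subgroupOf.mpr haP.2) ⟨(g : Δ₁ × Δ₂).2, hgm⟩
      rw [Subgroup.mem_subgroupOf] at this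
      exact this
  · rw [Subgroup.inf_relIndex_right]
    calc (A₁.prod A₂).relIndex G
        ≤ (A₁.prod A₂).relIndex (G₁.prod G₂) := by
          apply Subgroup.relIndex_le_of_le_right (aux_le_prod_maps G)
          rw [aux_relIndex_prod hA₁ hA₂]
          haveI := aux_finite_prod G₁ G₂
          exact Nat.mul_ne_zero (aux_relIndex_ne_zero hA₁) (aux_relIndex_ne_zero hA₂)
      _ = A₁.relIndex G₁ * A₂.relIndex G₂ := aux_relIndex_prod hA₁ hA₂
      _ ≤ J₁ * J₂ := Nat.mul_le_mul hr₁ hr₂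

/-- Lower bound. -/
lemma aux_lower {K J₁ J₂ : ℕ} (hK : WeakJordanBound (Δ₁ × Δ₂) K)
    {G₁ : Subgroup Δ₁} {G₂ : Subgroup Δ₂} [Finite G₁] [Finite G₂]
    (w₁ : ∀ A ≤ G₁, IsMulCommutative A → J₁ ≤ A.relIndex G₁)
    (w₂ : ∀ A ≤ G₂, IsMulCommutative A → J₂ ≤ A.relIndex G₂) :
    J₁ * J₂ ≤ K := by
  haveI := aux_finite_prod G₁ G₂
  obtain ⟨A, hAG, hAc, hAr⟩ := hK (G₁.prod G₂) inferInstance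
  haveI : Finite A := aux_finite_of_le hAG
  set B₁ := A.map (MonoidHom.fst Δ₁ Δ₂) with hB₁
  set B₂ := A.map (MonoidHom.snd Δ₁ Δ₂) with hB₂
  haveI : Finite B₁ := aux_finite_map A _
  haveI : Finite B₂ := aux_finite_map A _
  have hB₁G : B₁ ≤ G₁ := by
    rintro x ⟨g, hg, rfl⟩
    exact (Subgroup.mem_prod.mp (hAG hg)).1
  have hB₂G : B₂ ≤ G₂ := by
    rintro x ⟨g, hg, rfl⟩
    exact (Subgroup.mem_prod.mp (hAG hg)).2
  haveI := hAc
  have hcard : Nat.card A ≤ Nat.card B₁ * Nat.card B₂ := by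
    rw [← Nat.card_prod]
    apply Nat.card_le_card_of_injective
      (fun a : A => ((⟨(a : Δ₁ × Δ₂).1, ⟨(a : Δ₁ × Δ₂), a.2, rfl⟩⟩ : B₁),
        (⟨(a : Δ₁ × Δ₂).2, ⟨(a : Δ₁ × Δ₂), a.2, rfl⟩⟩ : B₂)))
    intro a b hab
    have h1 : (a : Δ₁ × Δ₂).1 = (b : Δ₁ × Δ₂).1 := congrArg (fun p => (p.1 : Δ₁)) hab
    have h2 : (a : Δ₁ × Δ₂).2 = (b : Δ₁ × Δ₂).2 := congrArg (fun p => (p.2 : Δ₂)) hab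
    exact Subtype.ext (Prod.ext h1 h2)
  have e0 := aux_relIndex_mul_card hAG
  have e1 := aux_relIndex_mul_card hB₁G
  have e2 := aux_relIndex_mul_card hB₂G
  have key : B₁.relIndex G₁ * B₂.relIndex G₂ ≤ A.relIndex (G₁.prod G₂) := by
    have hpos : 0 < Nat.card B₁ * Nat.card B₂ :=
      Nat.mul_pos (aux_card_pos B₁) (aux_card_pos B₂)
    apply Nat.le_of_mul_le_mul_right _ hpos
    calc B₁.relIndex G₁ * B₂.relIndex G₂ * (Nat.card B₁ * Nat.card B₂)
        = (B₁.relIndex G₁ * Nat.card B₁) * (B₂.relIndex G₂ * Nat.card B₂) := by ring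
      _ = Nat.card G₁ * Nat.card G₂ := by rw [e1, e2]
      _ = Nat.card (G₁.prod G₂) := (aux_card_prod G₁ G₂).symm
      _ = A.relIndex (G₁.prod G₂) * Nat.card A := e0.symm
      _ ≤ A.relIndex (G₁.prod G₂) * (Nat.card B₁ * Nat.card B₂) :=
          Nat.mul_le_mul_left _ hcard
  calc J₁ * J₂ ≤ B₁.relIndex G₁ * B₂.relIndex G₂ :=
        Nat.mul_le_mul (w₁ B₁ hB₁G inferInstance) (w₂ B₂ hB₂G inferInstance)
    _ ≤ A.relIndex (G₁.prod G₂) := key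
    _ ≤ K := hAr

end Prod

lemma aux_weak_of_jordan {Γ : Type*} [Group Γ] {J : ℕ} (h : JordanBound Γ J) :
    WeakJordanBound Γ J := by
  intro G hG
  obtain ⟨A, hA, hc, -, hr⟩ := h G hG
  exact ⟨A, hA, hc, hr⟩

theorem weakJordanConst_prod {Δ₁ Δ₂ : Type*} [Group Δ₁] [Group Δ₂]
    (h₁ : JordanGroup Δ₁) (h₂ : JordanGroup Δ₂) :
    JordanGroup (Δ₁ × Δ₂) ∧
      weakJordanConst (Δ₁ × Δ₂) = weakJordanConst Δ₁ * weakJordanConst Δ₂ := by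
  obtain ⟨J₁, hJ₁⟩ := h₁
  obtain ⟨J₂, hJ₂⟩ := h₂
  have ne₁ : {J | WeakJordanBound Δ₁ J}.Nonempty := ⟨J₁, aux_weak_of_jordan hJ₁⟩
  have ne₂ : {J | WeakJordanBound Δ₂ J}.Nonempty := ⟨J₂, aux_weak_of_jordan hJ₂⟩
  have mem₁ : WeakJordanBound Δ₁ (weakJordanConst Δ₁) := Nat.sInf_mem ne₁
  have mem₂ : WeakJordanBound Δ₂ (weakJordanConst Δ₂) := Nat.sInf_mem ne₂
  have pos₁ : 0 < weakJordanConst Δ₁ :=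
    Nat.pos_of_ne_zero (fun h => aux_zero_not_weak (h ▸ mem₁))
  have pos₂ : 0 < weakJordanConst Δ₂ :=
    Nat.pos_of_ne_zero (fun h => aux_zero_not_weak (h ▸ mem₂))
  have nmem₁ : ¬ WeakJordanBound Δ₁ (weakJordanConst Δ₁ - 1) := by
    intro h
    have h2 : weakJordanConst Δ₁ ≤ weakJordanConst Δ₁ - 1 :=
      Nat.sInf_le (s := {J | WeakJordanBound Δ₁ J}) h
    omega
  have nmem₂ : ¬ WeakJordanBound Δ₂ (weakJordanConst Δ₂ - 1) := by
    intro h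
    have h2 : weakJordanConst Δ₂ ≤ weakJordanConst Δ₂ - 1 :=
      Nat.sInf_le (s := {J | WeakJordanBound Δ₂ J}) h
    omega
  unfold WeakJordanBound at nmem₁ nmem₂
  push_neg at nmem₁ nmem₂
  obtain ⟨G₁, hG₁f, hG₁⟩ := nmem₁
  obtain ⟨G₂, hG₂f, hG₂⟩ := nmem₂
  haveI := hG₁f; haveI := hG₂f
  have w₁ : ∀ A ≤ G₁, IsMulCommutative A → weakJordanConst Δ₁ ≤ A.relIndex G₁ := by
    intro A hA hc
    have := hG₁ A hA hc
    omega
  have w₂ : ∀ A ≤ G₂, IsMulCommutative A → weakJordanConst Δ₂ ≤ A.relIndex G₂ := by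
    intro A hA hc
    have := hG₂ A hA hc
    omega
  refine ⟨⟨J₁ * J₂, aux_jordan_prod hJ₁ hJ₂⟩, ?_⟩
  have memP : WeakJordanBound (Δ₁ × Δ₂) (weakJordanConst Δ₁ * weakJordanConst Δ₂) :=
    aux_weak_prod mem₁ mem₂
  have neP : {J | WeakJordanBound (Δ₁ × Δ₂) J}.Nonempty := ⟨_, memP⟩
  apply le_antisymm
  · exact Nat.sInf_le memP
  · exact aux_lower (Nat.sInf_mem neP) w₁ w₂
end

section
/- If there is a surjective group homomorphism Γ₁ → Γ₂ with finite kernel and Γ₁ is Jordan, then Γ₂ is Jordan, and moreover J̄(Γ₁) ≥ J̄(Γ₂) and J(Γ₁) ≥ J(Γ₂). -/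
section Aux

variable {Γ₁ Γ₂ : Type*} [Group Γ₁] [Group Γ₂]

lemma preimage_finite_aux (φ : Γ₁ →* Γ₂) (hker : Finite φ.ker) (G : Subgroup Γ₂)
    (hG : Finite G) : Finite (G.comap φ) := by
  set H := G.comap φ with hH
  let ψ : H →* G := (φ.comp H.subtype).codRestrict G (fun x => x.2)
  have hkψ : Finite ψ.ker := by
    refine Finite.of_injective (fun x : ψ.ker => (⟨(x : H), ?_⟩ : φ.ker)) ?_
    · have hx := x.2
      simp only [ψ, MonoidHom.mem_ker] at hx ⊢
      exact congrArg Subtype.val hx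
    · intro a b hab
      have h : ((a : H) : Γ₁) = ((b : H) : Γ₁) := congrArg (fun z : φ.ker => (z : Γ₁)) hab
      exact Subtype.ext (Subtype.ext h)
  have hq : Finite (H ⧸ ψ.ker) :=
    Finite.of_equiv _ (QuotientGroup.quotientKerEquivRange ψ).symm.toEquiv
  haveI := hkψ; haveI := hq
  exact Finite.of_equiv _ (Subgroup.groupEquivQuotientProdSubgroup (s := ψ.ker)).symm

lemma push_core (φ : Γ₁ →* Γ₂) (hsurj : Function.Surjective φ) {J : ℕ} (G : Subgroup Γ₂)
    (hHfin : Finite (G.comap φ)) (A : Subgroup Γ₁) (hle : A ≤ G.comap φ)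
    (hcomm : IsMulCommutative A) (hrel : A.relIndex (G.comap φ) ≤ J) :
    A.map φ ≤ G ∧ IsMulCommutative (A.map φ) ∧ (A.map φ).relIndex G ≤ J := by
  set H := G.comap φ with hHdef
  have hmap : A.map φ ≤ G := (Subgroup.map_le_iff_le_comap).2 hle
  refine ⟨hmap, ?_, ?_⟩
  · haveI := hcomm; exact Subgroup.map_isMulCommutative A φ
  · have hmc : H.map φ = G := Subgroup.map_comap_eq_self_of_surjective hsurj G
    have h1 : ((A.map φ).comap φ).relIndex H = (A.map φ).relIndex (H.map φ) :=
      Subgroup.relIndex_comap (A.map φ) φ H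
    rw [hmc] at h1
    have hne : A.relIndex H ≠ 0 := by
      haveI : Finite (H ⧸ A.subgroupOf H) := Quotient.finite _
      exact Subgroup.index_ne_zero_of_finite
    have h2 : ((A.map φ).comap φ).relIndex H ≤ A.relIndex H :=
      Subgroup.relIndex_le_of_le_left (Subgroup.le_comap_map φ A) hne
    omega

lemma push_normal (φ : Γ₁ →* Γ₂) (hsurj : Function.Surjective φ) (G : Subgroup Γ₂)
    (A : Subgroup Γ₁) (hle : A ≤ G.comap φ) (hN : (A.subgroupOf (G.comap φ)).Normal) :
    ((A.map φ).subgroupOf G).Normal := by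
  constructor
  rintro n hn g
  rw [Subgroup.mem_subgroupOf] at hn ⊢
  obtain ⟨b, hbA, hb⟩ := hn
  obtain ⟨h, hh⟩ := hsurj (g : Γ₂)
  have hhH : h ∈ G.comap φ := by
    simp only [Subgroup.mem_comap, hh]
    exact g.2
  have hbH : b ∈ G.comap φ := hle hbA
  have key : (⟨h, hhH⟩ : G.comap φ) * ⟨b, hbH⟩ * (⟨h, hhH⟩ : G.comap φ)⁻¹ ∈
      A.subgroupOf (G.comap φ) :=
    hN.conj_mem ⟨b, hbH⟩ (by rwa [Subgroup.mem_subgroupOf]) ⟨h, hhH⟩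
  rw [Subgroup.mem_subgroupOf] at key
  refine ⟨h * b * h⁻¹, key, ?_⟩
  push_cast
  rw [map_mul, map_mul, map_inv, hh, hb]

lemma push_jordanBound (φ : Γ₁ →* Γ₂) (hsurj : Function.Surjective φ)
    (hker : Finite φ.ker) {J : ℕ} (h : JordanBound Γ₁ J) : JordanBound Γ₂ J := by
  intro G hG
  have hHfin : Finite (G.comap φ) := preimage_finite_aux φ hker G hG
  obtain ⟨A, hle, hcomm, hN, hrel⟩ := h (G.comap φ) hHfin
  obtain ⟨h1, h2, h3⟩ := push_core φ hsurj G hHfin A hle hcomm hrel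
  exact ⟨A.map φ, h1, h2, push_normal φ hsurj G A hle hN, h3⟩

lemma push_weakJordanBound (φ : Γ₁ →* Γ₂) (hsurj : Function.Surjective φ)
    (hker : Finite φ.ker) {J : ℕ} (h : WeakJordanBound Γ₁ J) : WeakJordanBound Γ₂ J := by
  intro G hG
  have hHfin : Finite (G.comap φ) := preimage_finite_aux φ hker G hG
  obtain ⟨A, hle, hcomm, hrel⟩ := h (G.comap φ) hHfin
  obtain ⟨h1, h2, h3⟩ := push_core φ hsurj G hHfin A hle hcomm hrel
  exact ⟨A.map φ, h1, h2, h3⟩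

end Aux

theorem jordan_of_surjective_finite_kernel {Γ₁ Γ₂ : Type*} [Group Γ₁] [Group Γ₂]
    (φ : Γ₁ →* Γ₂) (hsurj : Function.Surjective φ) (hker : Finite φ.ker)
    (hJ : JordanGroup Γ₁) :
    JordanGroup Γ₂ ∧ weakJordanConst Γ₂ ≤ weakJordanConst Γ₁ ∧
      jordanConst Γ₂ ≤ jordanConst Γ₁ := by
  obtain ⟨J₀, hJ₀⟩ := hJ
  have hW₀ : WeakJordanBound Γ₁ J₀ := fun G hG => by
    obtain ⟨A, h1, h2, _, h4⟩ := hJ₀ G hG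
    exact ⟨A, h1, h2, h4⟩
  refine ⟨⟨J₀, push_jordanBound φ hsurj hker hJ₀⟩, ?_, ?_⟩
  · have hne : {J | WeakJordanBound Γ₁ J}.Nonempty := ⟨J₀, hW₀⟩
    have hmem := Nat.sInf_mem hne
    exact Nat.sInf_le (push_weakJordanBound φ hsurj hker hmem)
  · have hne : {J | JordanBound Γ₁ J}.Nonempty := ⟨J₀, hJ₀⟩
    have hmem := Nat.sInf_mem hne
    exact Nat.sInf_le (push_jordanBound φ hsurj hker hmem)
end

section
/- Every nontrivial finite abelian subgroup of PGL₃(ℂ) can be generated by at most three elements. -/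
/-- The projective general linear group `PGL m ℂ`. -/
abbrev PGL (m : ℕ) : Type :=
  Matrix.GeneralLinearGroup (Fin m) ℂ ⧸ Subgroup.center (Matrix.GeneralLinearGroup (Fin m) ℂ)

local notation "M3" => Matrix (Fin 3) (Fin 3) ℂ
local notation "GL3" => Matrix.GeneralLinearGroup (Fin 3) ℂ
local notation "V3" => (Fin 3 → ℂ)



namespace PGLAux

open Matrix Subgroup Module Module.End Function Finset


noncomputable def ee : M3 ≃ₐ[ℂ] Module.End ℂ V3 := Matrix.toLinAlgEquiv'

lemma gl_inj (W : GL3) : Function.Injective ⇑(ee (W.val)) := by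
  have key : ∀ x, ee ((W⁻¹).val) (ee (W.val) x) = x := by
    intro x
    rw [← Module.End.mul_apply, ← _root_.map_mul, ← Units.val_mul, inv_mul_cancel, Units.val_one,
      _root_.map_one, Module.End.one_apply]
  exact fun a b hab => by rw [← key a, ← key b, hab]

lemma smul_cancel {w : V3} (hw : w ≠ 0) {a b : ℂ} (h : a • w = b • w) : a = b := by
  by_contra hne
  have h2 : (a - b) • w = 0 := by rw [sub_smul, h, sub_self]
  rcases smul_eq_zero.mp h2 with h3 | h3
  · exact hne (sub_eq_zero.mp h3)
  · exact hw h3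

lemma unit_matrix_ne_zero (W : GL3) : (W.val : M3) ≠ 0 := by
  intro h0
  have h1 : (W.val * (W⁻¹).val : M3) = 1 := by
    rw [← Units.val_mul, mul_inv_cancel, Units.val_one]
  rw [h0, zero_mul] at h1
  have h2 := congr_fun (congr_fun h1 0) 0
  simp at h2

lemma units_smul_cancel {u v : ℂˣ} {N : M3} (hN : N ≠ 0) (h : (u:ℂ) • N = (v:ℂ) • N) : u = v := by
  apply Units.ext
  by_contra hne
  have h2 : ((u:ℂ) - v) • N = 0 := by rw [sub_smul, h, sub_self]
  rcases smul_eq_zero.mp h2 with h3 | h3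
  · exact hne (sub_eq_zero.mp h3)
  · exact hN h3

lemma mem_center_GL3_iff {g : GL3} :
    g ∈ Subgroup.center GL3 ↔ ∃ c : ℂˣ, (g.val : M3) = (c : ℂ) • 1 := by
  constructor
  · intro hg
    have hcomm : ∀ t : Matrix.TransvectionStruct (Fin 3) ℂ, Commute t.toMatrix g.val := by
      intro t
      have ht := Subgroup.mem_center_iff.mp hg
        (Matrix.SpecialLinearGroup.toGL ⟨t.toMatrix, by simp⟩)
      have ht2 := congrArg Units.val ht
      simpa [Units.val_mul, Matrix.SpecialLinearGroup.toGL, Commute, SemiconjBy] using ht2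
    obtain ⟨c, hc⟩ := Matrix.mem_range_scalar_of_commute_transvectionStruct hcomm
    have hc' : (g.val : M3) = c • 1 := by
      rw [← hc, Matrix.smul_one_eq_diagonal]
      rfl
    have hc0 : c ≠ 0 := fun h => unit_matrix_ne_zero g (by rw [hc', h, zero_smul])
    exact ⟨Units.mk0 c hc0, by simpa using hc'⟩
  · rintro ⟨c, hc⟩
    rw [Subgroup.mem_center_iff]
    intro h
    apply Units.ext
    rw [Units.val_mul, Units.val_mul, hc, smul_mul_assoc, mul_smul_comm, one_mul, mul_one]

lemma central_factor {A A' : GL3} (h : (QuotientGroup.mk A : PGL 3) = QuotientGroup.mk A') :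
    ∃ c : ℂˣ, (A'.val : M3) = (c:ℂ) • A.val := by
  have h1 : (QuotientGroup.mk (A⁻¹ * A') : PGL 3) = 1 := by
    rw [QuotientGroup.mk_mul, QuotientGroup.mk_inv, h, inv_mul_cancel]
  have h2 : A⁻¹ * A' ∈ Subgroup.center GL3 := (QuotientGroup.eq_one_iff _).mp h1
  obtain ⟨c, hc⟩ := mem_center_GL3_iff.mp h2
  refine ⟨c, ?_⟩
  have h3 : A' = A * (A⁻¹ * A') := by group
  rw [h3, Units.val_mul, hc, mul_smul_comm, mul_one]

lemma mat_pair_mul {A A' C : M3} {u u' : ℂ} (hu : A*C = u•(C*A)) (hu' : A'*C = u'•(C*A')) :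
    (A*A')*C = (u*u')•(C*(A*A')) := by
  rw [mul_assoc, hu', mul_smul_comm, ← mul_assoc, hu, smul_mul_assoc, smul_smul,
    mul_assoc, mul_comm u' u]

lemma pgl_pair {A C : GL3}
    (h : (QuotientGroup.mk A : PGL 3) * QuotientGroup.mk C
        = QuotientGroup.mk C * QuotientGroup.mk A) :
    ∃ u : ℂˣ, ((A*C).val : M3) = (u:ℂ) • ((C*A).val) ∧ u^3 = 1 := by
  have h' : (QuotientGroup.mk (C*A) : PGL 3) = QuotientGroup.mk (A*C) := by
    rw [QuotientGroup.mk_mul, QuotientGroup.mk_mul, h]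
  obtain ⟨u, hu⟩ := central_factor h'
  refine ⟨u, hu, ?_⟩
  have hd : Matrix.det ((A*C).val : M3) = Matrix.det ((C*A).val : M3) := by
    rw [Units.val_mul, Units.val_mul, Matrix.det_mul, Matrix.det_mul, mul_comm]
  have hd2 : Matrix.det ((A*C).val : M3) = (u:ℂ)^3 * Matrix.det ((C*A).val : M3) := by
    rw [hu, Matrix.det_smul]
    norm_num
  have hdet0 : Matrix.det ((C*A).val : M3) ≠ 0 := by
    have h1 : Matrix.det ((C*A).val : M3) * Matrix.det (((C*A)⁻¹).val : M3) = 1 := by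
      rw [← Matrix.det_mul, ← Units.val_mul, mul_inv_cancel, Units.val_one, Matrix.det_one]
    exact left_ne_zero_of_mul_eq_one h1
  have hcube : (u:ℂ)^3 = 1 := by
    have h5 : (u:ℂ)^3 * Matrix.det ((C*A).val : M3) = 1 * Matrix.det ((C*A).val : M3) := by
      rw [one_mul, ← hd2, hd]
    exact mul_right_cancel₀ hdet0 h5
  exact Units.ext (by push_cast; exact hcube)

lemma pair_transfer {A A' C : GL3} (h : (QuotientGroup.mk A : PGL 3) = QuotientGroup.mk A')
    {u : ℂˣ} (hu : ((A*C).val : M3) = (u:ℂ) • ((C*A).val)) :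
    ((A'*C).val : M3) = (u:ℂ) • ((C*A').val) := by
  obtain ⟨c, hc⟩ := central_factor h
  have l1 : ((A'*C).val : M3) = (c:ℂ) • ((A*C).val) := by
    rw [Units.val_mul, Units.val_mul, hc, smul_mul_assoc]
  have l2 : ((C*A').val : M3) = (c:ℂ) • ((C*A).val) := by
    rw [Units.val_mul, Units.val_mul, hc, mul_smul_comm]
  rw [l1, l2, hu, smul_comm]

end PGLAux


namespace PGLAux2
open Matrix Subgroup Module Module.End Function Finset


noncomputable def ee : M3 ≃ₐ[ℂ] Module.End ℂ V3 := Matrix.toLinAlgEquiv'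

lemma smul_cancel {w : V3} (hw : w ≠ 0) {a b : ℂ} (h : a • w = b • w) : a = b := by
  by_contra hne
  have h2 : (a - b) • w = 0 := by rw [sub_smul, h, sub_self]
  rcases smul_eq_zero.mp h2 with h3 | h3
  · exact hne (sub_eq_zero.mp h3)
  · exact hw h3

lemma gl_inj (W : GL3) : Function.Injective ⇑(ee (W.val)) := by
  have key : ∀ x, ee ((W⁻¹).val) (ee (W.val) x) = x := by
    intro x
    rw [← Module.End.mul_apply, ← _root_.map_mul, ← Units.val_mul, inv_mul_cancel,
      Units.val_one, _root_.map_one, Module.End.one_apply]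
  exact fun a b hab => by rw [← key a, ← key b, hab]

lemma eig_line {f : Module.End ℂ V3} {v : Fin 3 → V3} {μ : Fin 3 → ℂ}
    (b : Basis (Fin 3) ℂ V3) (hb : ⇑b = v)
    (hv : ∀ i, f (v i) = μ i • v i) (hμ : Function.Injective μ)
    {w : V3} {j : Fin 3} (hw : f w = μ j • w) : ∃ c : ℂ, w = c • v j := by
  set c : Fin 3 → ℂ := fun i => b.repr w i with hc
  have hrepr : w = ∑ i, c i • v i := by
    conv_lhs => rw [← b.sum_repr w]
    simp [hb, hc]
  have h1 : f w = ∑ i, (c i * μ i) • v i := by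
    conv_lhs => rw [hrepr]
    rw [_root_.map_sum]
    refine Finset.sum_congr rfl fun i _ => ?_
    rw [LinearMap.map_smul, hv i, smul_smul]
  have h2 : μ j • w = ∑ i, (μ j * c i) • v i := by
    conv_lhs => rw [hrepr]
    rw [Finset.smul_sum]
    refine Finset.sum_congr rfl fun i _ => ?_
    rw [smul_smul]
  have h0 : ∑ i, ((μ i - μ j) * c i) • v i = 0 := by
    have h3 : ∑ i, ((μ i - μ j) * c i) • v i = f w - μ j • w := by
      rw [h1, h2, ← Finset.sum_sub_distrib]
      refine Finset.sum_congr rfl fun i _ => ?_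
      rw [← sub_smul]
      congr 1
      ring
    rw [h3, hw, sub_self]
  have hli : LinearIndependent ℂ v := hb ▸ b.linearIndependent
  have hcoef := Fintype.linearIndependent_iff.mp hli (fun i => (μ i - μ j) * c i) h0
  refine ⟨c j, ?_⟩
  rw [hrepr, Finset.sum_eq_single j]
  · intro i _ hij
    have hne : (μ i - μ j) ≠ 0 := sub_ne_zero.mpr (fun he => hij (hμ he))
    have hci : c i = 0 := by
      rcases mul_eq_zero.mp (hcoef i) with h | h
      · exact absurd h hne
      · exact h
    rw [hci, zero_smul]
  · intro h
    exact absurd (Finset.mem_univ j) h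

lemma core2 (X Y Z : GL3) (ω : ℂ) (hω1 : ω ≠ 1) (hω3 : ω^3 = 1)
    (hXY : (X.val * Y.val : M3) = ω • (Y.val * X.val))
    (hZX : (Z.val * X.val : M3) = X.val * Z.val)
    (hZY : (Z.val * Y.val : M3) = Y.val * Z.val) :
    ∃ c : ℂ, c ≠ 0 ∧ (Z.val : M3) = c • 1 := by
  have hω0 : ω ≠ 0 := by intro h; rw [h] at hω3; norm_num at hω3
  have hω2 : ω^2 ≠ 1 := by
    intro h
    apply hω1
    rw [← hω3, pow_succ, h, one_mul]
  set fX := ee X.val with hfX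
  set fY := ee Y.val with hfY
  set fZ := ee Z.val with hfZ
  have hYX : fY * fX = ω⁻¹ • (fX * fY) := by
    rw [← _root_.map_mul, ← _root_.map_mul, ← _root_.map_smul]
    congr 1
    rw [hXY, smul_smul, inv_mul_cancel₀ hω0, one_smul]
  have hZXe : fZ * fX = fX * fZ := by rw [← _root_.map_mul, ← _root_.map_mul, hZX]
  have hZYe : fZ * fY = fY * fZ := by rw [← _root_.map_mul, ← _root_.map_mul, hZY]
  obtain ⟨μ0, hμ0⟩ := Module.End.exists_eigenvalue fY
  obtain ⟨v0, hv0⟩ := hμ0.exists_hasEigenvector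
  have hv0ne : v0 ≠ 0 := hv0.right
  have hv0eq : fY v0 = μ0 • v0 := hv0.apply_eq_smul
  have hμ0ne : μ0 ≠ 0 := by
    intro h
    apply hv0ne
    apply gl_inj Y
    rw [← hfY, hv0eq, h, zero_smul, _root_.map_zero]
  set v : Fin 3 → V3 := ![v0, fX v0, fX (fX v0)] with hv
  set μ : Fin 3 → ℂ := ![μ0, ω⁻¹ * μ0, ω⁻¹ * (ω⁻¹ * μ0)] with hμ
  have hstep : ∀ (w : V3) (a : ℂ), fY w = a • w → fY (fX w) = (ω⁻¹ * a) • fX w := by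
    intro w a hw
    have h1 : (fY * fX) w = (ω⁻¹ • (fX * fY)) w := by rw [hYX]
    simp only [Module.End.mul_apply, LinearMap.smul_apply] at h1
    rw [h1, hw, _root_.map_smul, smul_smul]
  have heig1 : fY (fX v0) = (ω⁻¹ * μ0) • fX v0 := hstep v0 μ0 hv0eq
  have heig2 : fY (fX (fX v0)) = (ω⁻¹ * (ω⁻¹ * μ0)) • fX (fX v0) :=
    hstep (fX v0) (ω⁻¹ * μ0) heig1
  have heigeq : ∀ i, fY (v i) = μ i • v i := by
    intro i
    fin_cases i
    · exact hv0eq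
    · exact heig1
    · exact heig2
  have hvne : ∀ i, v i ≠ 0 := by
    intro i
    fin_cases i
    · exact hv0ne
    · intro h
      apply hv0ne
      apply gl_inj X
      show fX v0 = fX 0
      rw [_root_.map_zero]
      exact h
    · intro h
      apply hv0ne
      apply gl_inj X
      apply gl_inj X
      show fX (fX v0) = fX (fX 0)
      rw [_root_.map_zero, _root_.map_zero]
      exact h
  have hωinv1 : ω⁻¹ ≠ 1 := fun h => hω1 (by rw [← inv_inv ω, h, inv_one])
  have d01 : μ0 ≠ ω⁻¹ * μ0 := by
    intro h
    apply hωinv1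
    have : (1:ℂ) * μ0 = ω⁻¹ * μ0 := by rw [one_mul, ← h]
    exact (mul_right_cancel₀ hμ0ne this).symm
  have d02 : μ0 ≠ ω⁻¹ * (ω⁻¹ * μ0) := by
    intro h
    apply hω2
    have h1 : ω^2 * μ0 = ω^2 * (ω⁻¹ * (ω⁻¹ * μ0)) := by rw [← h]
    have h2 : ω^2 * (ω⁻¹ * (ω⁻¹ * μ0)) = (ω * ω⁻¹) * ((ω * ω⁻¹) * μ0) := by ring
    rw [mul_inv_cancel₀ hω0, one_mul, one_mul] at h2
    have h3 : ω^2 * μ0 = 1 * μ0 := by rw [h1, h2, one_mul]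
    exact mul_right_cancel₀ hμ0ne h3
  have d12 : ω⁻¹ * μ0 ≠ ω⁻¹ * (ω⁻¹ * μ0) := by
    intro h
    exact d01 (mul_left_cancel₀ (inv_ne_zero hω0) h)
  have hμinj : Function.Injective μ := by
    intro i j hij
    fin_cases i <;> fin_cases j <;>
      first
        | rfl
        | exact absurd hij d01
        | exact absurd hij d02
        | exact absurd hij d12
        | exact absurd hij.symm d01
        | exact absurd hij.symm d02
        | exact absurd hij.symm d12
  have hli : LinearIndependent ℂ v :=
    Module.End.eigenvectors_linearIndependent' fY μ hμinj v
      (fun i => ⟨Module.End.mem_eigenspace_iff.mpr (heigeq i), hvne i⟩)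
  have hcard : Fintype.card (Fin 3) = Module.finrank ℂ V3 := by
    simp [Module.finrank_fin_fun]
  let b : Basis (Fin 3) ℂ V3 := basisOfLinearIndependentOfCardEqFinrank hli hcard
  have hbv : ⇑b = v := coe_basisOfLinearIndependentOfCardEqFinrank hli hcard
  have hZeig : ∀ i, fY (fZ (v i)) = μ i • fZ (v i) := by
    intro i
    have h1 : (fY * fZ) (v i) = (fZ * fY) (v i) := by rw [hZYe]
    simp only [Module.End.mul_apply] at h1
    rw [h1, heigeq i, _root_.map_smul]
  have hz : ∀ i, ∃ c : ℂ, fZ (v i) = c • v i := fun i => eig_line b hbv heigeq hμinj (hZeig i)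
  choose z hzspec using hz
  have hcommZX : ∀ w, fZ (fX w) = fX (fZ w) := by
    intro w
    have h1 : (fZ * fX) w = (fX * fZ) w := by rw [hZXe]
    simpa [Module.End.mul_apply] using h1
  have hXv0 : fX (v 0) = v 1 := rfl
  have hXv1 : fX (v 1) = v 2 := rfl
  have hz1 : z 1 = z 0 := by
    apply smul_cancel (hvne 1)
    calc z 1 • v 1 = fZ (v 1) := (hzspec 1).symm
    _ = fZ (fX (v 0)) := by rw [hXv0]
    _ = fX (fZ (v 0)) := hcommZX _
    _ = fX (z 0 • v 0) := by rw [hzspec 0]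
    _ = z 0 • fX (v 0) := _root_.map_smul _ _ _
    _ = z 0 • v 1 := by rw [hXv0]
  have hz2 : z 2 = z 1 := by
    apply smul_cancel (hvne 2)
    calc z 2 • v 2 = fZ (v 2) := (hzspec 2).symm
    _ = fZ (fX (v 1)) := by rw [hXv1]
    _ = fX (fZ (v 1)) := hcommZX _
    _ = fX (z 1 • v 1) := by rw [hzspec 1]
    _ = z 1 • fX (v 1) := _root_.map_smul _ _ _
    _ = z 1 • v 2 := by rw [hXv1]
  have hz0ne : z 0 ≠ 0 := by
    intro h
    apply hvne 0
    apply gl_inj Z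
    rw [← hfZ, hzspec 0, h, zero_smul, _root_.map_zero]
  have hfZeq : fZ = z 0 • (1 : Module.End ℂ V3) := by
    refine b.ext fun i => ?_
    have hbi : b i = v i := by rw [hbv]
    rw [hbi]
    have : fZ (v i) = z 0 • v i := by
      fin_cases i
      · exact hzspec 0
      · exact (hzspec 1).trans (by rw [hz1]; exact rfl)
      · exact (hzspec 2).trans (by rw [hz2, hz1]; exact rfl)
    rw [this]
    simp
  refine ⟨z 0, hz0ne, ?_⟩
  apply ee.injective
  rw [_root_.map_smul, _root_.map_one]
  exact hfZeq

end PGLAux2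


namespace PGLAux3
open Module Module.End Function Finset Subgroup


lemma maxGen_inf_le_mul {f₁ f₂ : Module.End ℂ V3} (h : Commute f₁ f₂) (μ₁ μ₂ : ℂ) :
    f₁.maxGenEigenspace μ₁ ⊓ f₂.maxGenEigenspace μ₂ ≤ (f₁ * f₂).maxGenEigenspace (μ₁ * μ₂) := by
  intro m hm
  rw [Submodule.mem_inf, Module.End.mem_maxGenEigenspace, Module.End.mem_maxGenEigenspace] at hm
  obtain ⟨⟨k₁, h1⟩, ⟨k₂, h2⟩⟩ := hm
  rw [Module.End.mem_maxGenEigenspace]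
  set C1 : Module.End ℂ V3 := f₁ - μ₁ • 1 with hC1
  set C2 : Module.End ℂ V3 := f₂ - μ₂ • 1 with hC2
  have hf1C1 : Commute f₁ C1 := (Commute.refl f₁).sub_right ((Commute.one_right f₁).smul_right μ₁)
  have hf1C2 : Commute f₁ C2 := h.sub_right ((Commute.one_right f₁).smul_right μ₂)
  have hf2C1 : Commute f₂ C1 := h.symm.sub_right ((Commute.one_right f₂).smul_right μ₁)
  have hC1C2 : Commute C1 C2 :=
    hf1C2.sub_left ((Commute.one_left (f₂ - μ₂ • 1)).smul_left μ₁)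
  have key : f₁ * f₂ - (μ₁ * μ₂) • (1 : Module.End ℂ V3) = f₁ * C2 + μ₂ • C1 := by
    rw [hC1, hC2]
    rw [mul_sub, smul_sub, mul_smul_comm, mul_one, smul_smul, mul_comm μ₂ μ₁]
    abel
  have hT : Commute (f₁ * C2) (μ₂ • C1) := (hf1C1.mul_left hC1C2.symm).smul_right μ₂
  refine ⟨k₂ + k₁, ?_⟩
  rw [key, hT.add_pow', LinearMap.coe_sum, Finset.sum_apply]
  refine Finset.sum_eq_zero fun ⟨i, j⟩ hij => ?_
  rw [Finset.HasAntidiagonal.mem_antidiagonal] at hij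
  suffices h0 : (((f₁ * C2)^i) * ((μ₂ • C1)^j)) m = 0 by
    rw [LinearMap.smul_apply, h0, smul_zero]
  rcases (by omega : k₂ ≤ i ∨ k₁ ≤ j) with hi | hj
  · have hC2m : (C2 ^ i) m = 0 := Module.End.pow_map_zero_of_le hi h2
    have e3 : (C2 ^ i) ((C1 ^ j) m) = 0 := by
      calc (C2 ^ i) ((C1 ^ j) m) = ((C2^i) * (C1^j)) m := by rw [Module.End.mul_apply]
      _ = ((C1^j) * (C2^i)) m := by rw [← (hC1C2.pow_pow j i).eq]
      _ = 0 := by rw [Module.End.mul_apply, hC2m, map_zero]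
    calc (((f₁ * C2)^i) * ((μ₂ • C1)^j)) m
        = ((f₁^i * C2^i) * (μ₂^j • C1^j)) m := by rw [hf1C2.mul_pow, smul_pow]
    _ = (f₁^i * C2^i) (μ₂^j • ((C1^j) m)) := by
        rw [Module.End.mul_apply, LinearMap.smul_apply]
    _ = μ₂^j • ((f₁^i * C2^i) ((C1^j) m)) := by rw [LinearMap.map_smul]
    _ = μ₂^j • ((f₁^i) ((C2^i) ((C1^j) m))) := by rw [Module.End.mul_apply]
    _ = 0 := by rw [e3, map_zero, smul_zero]
  · have hC1m : (C1 ^ j) m = 0 := Module.End.pow_map_zero_of_le hj h1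
    rw [smul_pow, Module.End.mul_apply, LinearMap.smul_apply, hC1m, smul_zero, map_zero]

lemma binom_decomp {R : Type*} [Ring R] (M : R) (n : ℕ) :
    (1 + M)^n = 1 + M * ∑ m ∈ Finset.range n, M^m * (n.choose (m+1) : R) := by
  rw [add_comm (1 : R) M]
  rw [(Commute.one_right M).add_pow n, Finset.sum_range_succ']
  simp only [pow_zero, one_pow, one_mul, mul_one, Nat.choose_zero_right, Nat.cast_one]
  rw [Finset.mul_sum, add_comm]
  congr 1
  refine Finset.sum_congr rfl fun m _ => ?_
  rw [pow_succ', mul_assoc]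

lemma key_nilpotent {R : Type*} [Ring R] {M : R} (hM : IsNilpotent M) {n : ℕ} (hn : 0 < n)
    (hu : IsUnit ((n : ℕ) : R)) :
    ∃ S : R, (1 + M)^n = 1 + M * S ∧ Commute M S ∧ IsUnit S := by
  refine ⟨∑ m ∈ Finset.range n, M^m * (n.choose (m+1) : R), binom_decomp M n, ?_, ?_⟩
  · refine Commute.sum_right _ _ _ fun m _ => ?_
    exact ((Commute.refl M).pow_right m).mul_right ((Nat.cast_commute _ _).symm)
  · obtain ⟨n', rfl⟩ := Nat.exists_eq_succ_of_ne_zero hn.ne'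
    rw [Finset.sum_range_succ']
    simp only [pow_zero, one_mul, zero_add, Nat.choose_one_right]
    have hfac : ∑ m ∈ Finset.range n', M^(m+1) * (((n'+1).choose (m+1+1) : ℕ) : R)
        = M * ∑ m ∈ Finset.range n', M^m * (((n'+1).choose (m+2) : ℕ) : R) := by
      rw [Finset.mul_sum]
      refine Finset.sum_congr rfl fun m _ => ?_
      rw [pow_succ', mul_assoc]
    rw [hfac]
    have hnilp : IsNilpotent
        (M * ∑ m ∈ Finset.range n', M^m * (((n'+1).choose (m+2) : ℕ) : R)) := by
      refine Commute.isNilpotent_mul_right ?_ hM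
      refine Commute.sum_right _ _ _ fun m _ => ?_
      exact ((Commute.refl M).pow_right m).mul_right ((Nat.cast_commute _ _).symm)
    have hcomm2 : Commute
        (M * ∑ m ∈ Finset.range n', M^m * (((n'+1).choose (m+2) : ℕ) : R))
        (((n'.succ : ℕ) : R)) := (Nat.cast_commute _ _).symm
    first
      | exact hnilp.isUnit_add_right_of_commute hu hcomm2
      | exact hnilp.isUnit_add_left_of_commute hu hcomm2

lemma scalar_nilpotent_eq_zero {c : ℂ} (h : IsNilpotent (c • (1 : Module.End ℂ V3))) :
    c = 0 := by
  obtain ⟨k, hk⟩ := h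
  have hx : (Pi.single (0 : Fin 3) (1:ℂ) : V3) ≠ 0 := by
    intro h0
    have := congr_fun h0 0
    simp at this
  have h1 : (c ^ k) • (Pi.single (0:Fin 3) (1:ℂ) : V3) = 0 := by
    have h2 := LinearMap.congr_fun hk (Pi.single (0:Fin 3) (1:ℂ))
    rwa [smul_pow, one_pow, LinearMap.smul_apply, Module.End.one_apply, LinearMap.zero_apply] at h2
  have h3 : c ^ k = 0 := by
    rcases smul_eq_zero.mp h1 with h | h
    · exact h
    · exact absurd h hx
  exact pow_eq_zero_iff'.mp h3 |>.1

lemma unipotent_order {u : Module.End ℂ V3} {s : ℂ} (hs : s ≠ 0)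
    (hNil : IsNilpotent (u - s • 1)) {n : ℕ} (hn : 0 < n) {c : ℂ} (hc : u ^ n = c • 1) :
    u = s • 1 := by
  set M : Module.End ℂ V3 := s⁻¹ • u - 1 with hMdef
  have hMnil : IsNilpotent M := by
    have h1 : M = s⁻¹ • (u - s • 1) := by
      rw [smul_sub, smul_smul, inv_mul_cancel₀ hs, one_smul, hMdef]
    rw [h1]
    exact hNil.smul _
  have hpow1 : (1 + M)^n = ((s⁻¹)^n * c) • (1 : Module.End ℂ V3) := by
    have h2 : (1 : Module.End ℂ V3) + M = s⁻¹ • u := by rw [hMdef]; abel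
    rw [h2, smul_pow, hc, smul_smul]
  have hunit : IsUnit ((n : ℕ) : Module.End ℂ V3) := by
    have h3 : IsUnit ((n : ℂ)) := isUnit_iff_ne_zero.mpr (Nat.cast_ne_zero.mpr hn.ne')
    have h4 := h3.map (algebraMap ℂ (Module.End ℂ V3))
    rwa [map_natCast] at h4
  obtain ⟨S, hS1, hS2, hS3⟩ := key_nilpotent hMnil hn hunit
  set d : ℂ := (s⁻¹)^n * c with hd
  have hMS : M * S = (d - 1) • (1 : Module.End ℂ V3) := by
    have h5 : (1 : Module.End ℂ V3) + M * S = d • 1 := by rw [← hS1, hpow1]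
    have h6 : M * S = d • (1 : Module.End ℂ V3) - 1 := by rw [← h5]; abel
    rw [h6]
    first
      | module
      | rw [sub_smul, one_smul]
  have hMSnil : IsNilpotent (M * S) := hS2.isNilpotent_mul_right hMnil
  have hd1 : d - 1 = 0 := by
    rw [hMS] at hMSnil
    exact scalar_nilpotent_eq_zero hMSnil
  have hMS0 : M * S = 0 := by rw [hMS, hd1, zero_smul]
  obtain ⟨sv, rfl⟩ := hS3
  have hM0 : M = 0 := by
    have h6 : M = (M * sv) * (sv⁻¹ : (Module.End ℂ V3)ˣ) := by
      rw [mul_assoc, ← Units.val_mul, mul_inv_cancel, Units.val_one, mul_one]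
    rw [h6, hMS0, zero_mul]
  have h7 : s⁻¹ • u = (1 : Module.End ℂ V3) := by
    have := hM0
    rw [hMdef, sub_eq_zero] at this
    exact this
  calc u = s • (s⁻¹ • u) := by rw [smul_smul, mul_inv_cancel₀ hs, one_smul]
  _ = s • (1 : Module.End ℂ V3) := by rw [h7]

lemma gen_le : ∀ (n : ℕ) (G : Type) [Group G] [Finite G] (φ : G →* (Fin n → ℂˣ)),
    Function.Injective φ →
    ∃ S : Finset G, S.card ≤ n ∧ Subgroup.closure (S : Set G) = ⊤ := by
  intro n
  induction n with
  | zero =>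
    intro G _ _ φ hφ
    have hsub : Subsingleton G := ⟨fun a b => hφ (Subsingleton.elim _ _)⟩
    refine ⟨∅, by simp, ?_⟩
    rw [Finset.coe_empty, Subgroup.closure_empty]
    rw [eq_top_iff]
    intro x _
    rw [Subsingleton.elim x 1]
    exact one_mem _
  | succ n ih =>
    intro G _ _ φ hφ
    classical
    set πlast : G →* ℂˣ := (Pi.evalMonoidHom (fun _ : Fin (n+1) => ℂˣ) (Fin.last n)).comp φ
      with hπlast
    set K := πlast.ker with hK
    set φ' : K →* (Fin n → ℂˣ) :=
      MonoidHom.mk' (fun k i => φ k.val (Fin.castSucc i))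
        (by intro a b; funext i; simp [Subgroup.coe_mul, _root_.map_mul]) with hφ'
    have hφ'inj : Function.Injective φ' := by
      intro a b hab
      apply Subtype.ext
      apply hφ
      funext i
      refine Fin.lastCases ?_ ?_ i
      · have ha : φ a.val (Fin.last n) = 1 := a.2
        have hb : φ b.val (Fin.last n) = 1 := b.2
        rw [ha, hb]
      · intro i
        exact congrFun hab i
    obtain ⟨S', hS'c, hS'⟩ := ih K φ' hφ'inj
    have hcyc : IsCyclic (G ⧸ K) := by
      refine isCyclic_of_subgroup_isDomain
        ((Units.coeHom ℂ).comp ((πlast.range.subtype).comp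
          (QuotientGroup.quotientKerEquivRange πlast).toMonoidHom)) ?_
      intro a b hab
      simp only [MonoidHom.coe_comp, Function.comp_apply] at hab
      have h1 := Units.ext hab
      have h2 := Subtype.ext h1
      exact (QuotientGroup.quotientKerEquivRange πlast).injective h2
    obtain ⟨xq, hxq⟩ := hcyc.exists_generator
    obtain ⟨g, hg⟩ := QuotientGroup.mk'_surjective K xq
    refine ⟨insert g (S'.image (Subgroup.subtype K)), ?_, ?_⟩
    · calc (insert g (S'.image (Subgroup.subtype K))).card
          ≤ (S'.image (Subgroup.subtype K)).card + 1 := Finset.card_insert_le _ _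
      _ ≤ S'.card + 1 := by
          have := Finset.card_image_le (f := Subgroup.subtype K) (s := S')
          omega
      _ ≤ n + 1 := by omega
    · rw [eq_top_iff]
      intro x _
      set Scl := Subgroup.closure ((insert g (S'.image (Subgroup.subtype K)) : Finset G) : Set G)
        with hScl
      have hKle : K ≤ Scl := by
        have h1 : K = Subgroup.map K.subtype ⊤ := by
          rw [← MonoidHom.range_eq_map, Subgroup.range_subtype]
        rw [← hS'] at h1
        rw [h1, MonoidHom.map_closure]
        refine Subgroup.closure_mono ?_
        intro y hy
        simp only [Finset.coe_insert, Set.mem_insert_iff, Finset.coe_image] at *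
        right
        exact hy
      have hgS : g ∈ Scl := by
        apply Subgroup.subset_closure
        simp
      obtain ⟨m, hm⟩ := Subgroup.mem_zpowers_iff.mp (hxq (QuotientGroup.mk' K x))
      have hmem : x * (g ^ m)⁻¹ ∈ K := by
        have h2 : QuotientGroup.mk' K (x * (g ^ m)⁻¹) = 1 := by
          rw [_root_.map_mul, _root_.map_inv, map_zpow, hg, hm, mul_inv_cancel]
        rwa [← MonoidHom.mem_ker, QuotientGroup.ker_mk'] at h2
        
      have hx : x = (x * (g ^ m)⁻¹) * g ^ m := by group
      rw [hx]
      exact Subgroup.mul_mem _ (hKle hmem) (Subgroup.zpow_mem _ hgS m)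

end PGLAux3


open Matrix Subgroup Module Function Finset


set_option maxHeartbeats 1000000 in
theorem abelian_subgroup_PGL3_three_generators
    (B : Subgroup (PGL 3)) (hfin : Finite B) (hcomm : IsMulCommutative B)
    (hnt : B ≠ ⊥) :
    ∃ S : Finset (PGL 3), S.card ≤ 3 ∧ Subgroup.closure (S : Set (PGL 3)) = B := by
  classical
  haveI := hcomm
  suffices hsuff : ∃ S : Finset ↥B, S.card ≤ 3 ∧ Subgroup.closure (S : Set ↥B) = ⊤ by
    obtain ⟨Sb, h1, h2⟩ := hsuff
    refine ⟨Sb.image Subtype.val, ?_, ?_⟩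
    · exact le_trans Finset.card_image_le h1
    have hset : ((Sb.image Subtype.val) : Set (PGL 3))
        = ⇑B.subtype '' (Sb : Set ↥B) := by
      ext q
      simp [Finset.coe_image]
    rw [hset, ← MonoidHom.map_closure, h2, ← MonoidHom.range_eq_map, Subgroup.range_subtype]
  suffices hsuff2 : ∃ (n : ℕ) (_ : n ≤ 3) (φ : ↥B →* (Fin n → ℂˣ)), Function.Injective φ by
    obtain ⟨n, hn, φ, hφ⟩ := hsuff2
    obtain ⟨S, hS1, hS2⟩ := PGLAux3.gen_le n ↥B φ hφ
    exact ⟨S, hS1.trans hn, hS2⟩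
  have hsur := QuotientGroup.mk'_surjective (Subgroup.center GL3)
  set L : PGL 3 → GL3 := fun q => (hsur q).choose with hLdef
  have hL : ∀ q : PGL 3, QuotientGroup.mk (L q) = q := fun q => (hsur q).choose_spec
  have hmkB : ∀ (z : ↥B), QuotientGroup.mk (L z.val) ∈ B := fun z => by
    rw [hL]; exact z.2
  have hpair : ∀ P Q : GL3, QuotientGroup.mk P ∈ B → QuotientGroup.mk Q ∈ B →
      ∃ u : ℂˣ, ((P*Q).val : M3) = (u:ℂ) • ((Q*P).val) ∧ u^3 = 1 := by
    intro P Q hP hQ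
    exact PGLAux.pgl_pair (Subgroup.mul_comm_of_mem_isMulCommutative B hP hQ)
  by_cases hcase : ∀ P Q : GL3, QuotientGroup.mk P ∈ B → QuotientGroup.mk Q ∈ B →
      P * Q = Q * P
  · -- CASE 1 : all lifts commute
    set At : Subgroup GL3 := Subgroup.comap (QuotientGroup.mk' (Subgroup.center GL3)) B
      with hAt
    set f : ↥At → Module.End ℂ V3 := fun g => PGLAux2.ee (g.val.val) with hf
    have hcommAll : ∀ i j : ↥At, Commute (f i) (f j) := by
      intro i j
      have hij := hcase i.val j.val i.2 j.2
      have hcm : (i.val.val * j.val.val : M3) = j.val.val * i.val.val := by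
        calc (i.val.val * j.val.val : M3) = (i.val * j.val).val := (Units.val_mul _ _).symm
        _ = (j.val * i.val).val := by rw [hij]
        _ = _ := Units.val_mul _ _
      show f i * f j = f j * f i
      rw [hf, ← _root_.map_mul, ← _root_.map_mul, hcm]
    have h' : ∀ i, ⨆ μ, (f i).maxGenEigenspace μ = ⊤ :=
      fun i => Module.End.iSup_maxGenEigenspace_eq_top (f i)
    have htop :=
      Module.End.iSup_iInf_maxGenEigenspace_eq_top_of_iSup_maxGenEigenspace_eq_top_of_commute
        f (fun i j _ => hcommAll i j) h'
    have hMapsTo : ∀ (i j : ↥At) (φ : ℂ),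
        Set.MapsTo ⇑(f i) ↑((f j).maxGenEigenspace φ) ↑((f j).maxGenEigenspace φ) :=
      fun i j φ => Module.End.mapsTo_maxGenEigenspace_of_comm (hcommAll j i) φ
    have hind := Module.End.independent_iInf_maxGenEigenspace_of_forall_mapsTo f hMapsTo
    set W : (↥At → ℂ) → Submodule ℂ V3 := fun χ => ⨅ i, (f i).maxGenEigenspace (χ i) with hW
    haveI hfint : Fintype {χ : ↥At → ℂ // W χ ≠ ⊥} := hind.fintypeNeBotOfFiniteDimensional
    have hcard3 : Fintype.card {χ : ↥At → ℂ // W χ ≠ ⊥} ≤ 3 := by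
      have h1 := hind.subtype_ne_bot_le_finrank
      rwa [show Module.finrank ℂ V3 = 3 from Module.finrank_fin_fun ℂ] at h1
    have hfinj : ∀ g : ↥At, Function.Injective ⇑(f g) := fun g => PGLAux2.gl_inj g.val
    have hxne : (Pi.single (0:Fin 3) (1:ℂ) : V3) ≠ 0 := by
      intro h0
      have := congr_fun h0 0
      simp at this
    have hTne : Nonempty {χ : ↥At → ℂ // W χ ≠ ⊥} := by
      by_contra hne
      rw [not_nonempty_iff] at hne
      have hbot : ∀ χ : ↥At → ℂ, W χ = ⊥ := fun χ => by
        by_contra hb; exact hne.false ⟨χ, hb⟩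
      have heq : (⊤ : Submodule ℂ V3) = ⊥ := by
        rw [← htop]
        simp [hbot]
      have hx : (Pi.single (0:Fin 3) (1:ℂ) : V3) ∈ (⊤ : Submodule ℂ V3) := Submodule.mem_top
      rw [heq] at hx
      exact hxne ((Submodule.mem_bot ℂ).mp hx)
    obtain ⟨χ0⟩ := hTne
    have maxGen_disj : ∀ (F : Module.End ℂ V3) {a b : ℂ}, a ≠ b →
        Disjoint (F.maxGenEigenspace a) (F.maxGenEigenspace b) :=
      fun F a b hab => Module.End.disjoint_genEigenspace F hab ⊤ ⊤
    have hne_of_le : ∀ {χ : ↥At → ℂ}, W χ ≠ ⊥ → ∀ {F : Module.End ℂ V3} {a b : ℂ},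
        W χ ≤ F.maxGenEigenspace a → W χ ≤ F.maxGenEigenspace b → a = b := by
      intro χ hχ F a b ha hb
      by_contra hab
      have h3 := le_inf ha hb
      rw [(maxGen_disj F hab).eq_bot] at h3
      exact hχ (le_bot_iff.mp h3)
    have hmulχ : ∀ (χ : ↥At → ℂ), W χ ≠ ⊥ → ∀ g h : ↥At, χ (g * h) = χ g * χ h := by
      intro χ hχ g h
      have h1 : W χ ≤ (f (g*h)).maxGenEigenspace (χ (g*h)) := iInf_le _ _
      have h2 : W χ ≤ (f g * f h).maxGenEigenspace (χ g * χ h) := by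
        refine le_trans (le_inf (iInf_le _ g) (iInf_le _ h)) ?_
        exact PGLAux3.maxGen_inf_le_mul (hcommAll g h) (χ g) (χ h)
      have hfe : f (g * h) = f g * f h := by
        rw [hf]
        show PGLAux2.ee ((g*h).val.val) = _
        rw [show ((g*h : ↥At)).val.val = (g.val.val * h.val.val : M3) from
          by rw [Subgroup.coe_mul, Units.val_mul], _root_.map_mul]
      rw [hfe] at h1
      exact hne_of_le hχ h1 h2
    have hχne0 : ∀ (χ : ↥At → ℂ), W χ ≠ ⊥ → ∀ g : ↥At, χ g ≠ 0 := by
      intro χ hχ g h0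
      obtain ⟨x, hxW, hx0⟩ := (Submodule.ne_bot_iff _).mp hχ
      have h1 : x ∈ (f g).maxGenEigenspace (χ g) := (iInf_le _ g : W χ ≤ _) hxW
      rw [h0, Module.End.mem_maxGenEigenspace] at h1
      obtain ⟨k, hk⟩ := h1
      simp only [zero_smul, sub_zero] at hk
      apply hx0
      have hiter : ∀ (k : ℕ) (x : V3), ((f g)^k) x = 0 → x = 0 := by
        intro k
        induction k with
        | zero => intro x hx; simpa using hx
        | succ k ih =>
          intro x hx
          rw [pow_succ, Module.End.mul_apply] at hx
          have h2 : f g x = 0 := ih _ hx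
          exact hfinj g (by rw [h2, _root_.map_zero])
      exact hiter k x hk
    have hχscal : ∀ (χ : ↥At → ℂ), W χ ≠ ⊥ → ∀ (g g' : ↥At) (c : ℂˣ),
        (g'.val.val : M3) = (c:ℂ) • g.val.val → χ g' = (c:ℂ) * χ g := by
      intro χ hχ g g' c hgg
      have h1 : W χ ≤ (f g').maxGenEigenspace (χ g') := iInf_le _ _
      have h2 : W χ ≤ (f g').maxGenEigenspace ((c:ℂ) * χ g) := by
        have h3 : W χ ≤ (f g).maxGenEigenspace (χ g) := iInf_le _ _
        have h4 : f g' = (c:ℂ) • f g := by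
          rw [hf]
          show PGLAux2.ee g'.val.val = _
          rw [hgg, _root_.map_smul]
        rw [h4]
        exact le_trans h3 (Module.End.genEigenspace_le_smul (f g) (χ g) (c:ℂ) ⊤)
      exact hne_of_le hχ h1 h2
    have hgB : ∀ z : ↥B, L z.val ∈ At := fun z => by
      have : QuotientGroup.mk (L z.val) ∈ B := hmkB z
      exact this
    set gB : ↥B → ↥At := fun z => ⟨L z.val, hgB z⟩ with hgBdef
    have hψpair : ∀ (t : {χ : ↥At → ℂ // W χ ≠ ⊥}) (y z : ↥B), ∃ c : ℂˣ,
        t.val (gB (y*z)) = (c:ℂ) * (t.val (gB y) * t.val (gB z)) ∧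
        χ0.val (gB (y*z)) = (c:ℂ) * (χ0.val (gB y) * χ0.val (gB z)) := by
      intro t y z
      have hmkeq : (QuotientGroup.mk ((gB y).val * (gB z).val) : PGL 3)
          = QuotientGroup.mk ((gB (y*z)).val) := by
        show (QuotientGroup.mk ((L y.val) * (L z.val)) : PGL 3)
            = QuotientGroup.mk (L ((y*z):↥B).val)
        rw [QuotientGroup.mk_mul, hL, hL, hL]
        rfl
      obtain ⟨c, hc⟩ := PGLAux.central_factor hmkeq
      refine ⟨c, ?_, ?_⟩
      · rw [hχscal t.val t.2 ((gB y) * (gB z)) (gB (y*z)) c hc,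
          hmulχ t.val t.2 (gB y) (gB z)]
      · rw [hχscal χ0.val χ0.2 ((gB y) * (gB z)) (gB (y*z)) c hc,
          hmulχ χ0.val χ0.2 (gB y) (gB z)]
    set ψ : ↥B →* ({χ : ↥At → ℂ // W χ ≠ ⊥} → ℂˣ) := MonoidHom.mk'
      (fun z t => Units.mk0 (t.val (gB z) * (χ0.val (gB z))⁻¹)
        (mul_ne_zero (hχne0 t.val t.2 _) (inv_ne_zero (hχne0 χ0.val χ0.2 _))))
      (by
        intro y z
        funext t
        apply Units.ext
        obtain ⟨c, h5, h6⟩ := hψpair t y z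
        show t.val (gB (y*z)) * (χ0.val (gB (y*z)))⁻¹
            = (t.val (gB y) * (χ0.val (gB y))⁻¹) * (t.val (gB z) * (χ0.val (gB z))⁻¹)
        rw [h5, h6]
        have hc0 : (c:ℂ) ≠ 0 := Units.ne_zero c
        have h7 : χ0.val (gB y) ≠ 0 := hχne0 χ0.val χ0.2 _
        have h8 : χ0.val (gB z) ≠ 0 := hχne0 χ0.val χ0.2 _
        field_simp) with hψdef
    set eT := Fintype.equivFin {χ : ↥At → ℂ // W χ ≠ ⊥} with heT
    set φ : ↥B →* (Fin (Fintype.card {χ : ↥At → ℂ // W χ ≠ ⊥}) → ℂˣ) := MonoidHom.mk'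
      (fun z i => ψ z (eT.symm i))
      (by intro y z; funext i; exact congrFun (_root_.map_mul ψ y z) (eT.symm i)) with hφdef
    refine ⟨Fintype.card {χ : ↥At → ℂ // W χ ≠ ⊥}, hcard3, φ, ?_⟩
    have hker : ∀ z : ↥B, φ z = 1 → z = 1 := by
      intro z hz
      have hψz : ∀ t : {χ : ↥At → ℂ // W χ ≠ ⊥}, t.val (gB z) = χ0.val (gB z) := by
        intro t
        have h1 : ψ z t = 1 := by
          have h0 := congrFun hz (eT t)
          rwa [show (φ z (eT t)) = ψ z (eT.symm (eT t)) from rfl,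
            Equiv.symm_apply_apply] at h0
        have h2 : t.val (gB z) * (χ0.val (gB z))⁻¹ = 1 := congrArg Units.val h1
        exact (mul_inv_eq_one₀ (hχne0 χ0.val χ0.2 _)).mp h2
      set g : ↥At := gB z with hgdef
      set s : ℂ := χ0.val g with hs
      have hsne : s ≠ 0 := hχne0 χ0.val χ0.2 g
      set N : Module.End ℂ V3 := f g - s • 1 with hN
      have hker3 : ∀ χ : ↥At → ℂ, W χ ≤ LinearMap.ker (N ^ (Module.finrank ℂ V3)) := by
        intro χ
        by_cases hχ : W χ = ⊥
        · rw [hχ]; exact bot_le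
        · intro x hx
          have hval : χ g = s := hψz ⟨χ, hχ⟩
          have h1 : x ∈ (f g).maxGenEigenspace (χ g) := (iInf_le _ g : W χ ≤ _) hx
          rw [hval] at h1
          have h2 := Module.End.genEigenspace_le_genEigenspace_finrank (f g) s ⊤ h1
          rw [Module.End.genEigenspace_nat] at h2
          exact h2
      have hNnil : IsNilpotent N := by
        refine ⟨Module.finrank ℂ V3, ?_⟩
        have h3 : (⊤ : Submodule ℂ V3) ≤ LinearMap.ker (N ^ (Module.finrank ℂ V3)) := by
          rw [← htop]
          exact iSup_le hker3
        apply LinearMap.ext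
        intro x
        have h4 := h3 (Submodule.mem_top (x := x))
        rw [LinearMap.mem_ker] at h4
        simpa using h4
      obtain ⟨nn, hnn, hznn⟩ : ∃ (nn : ℕ), 0 < nn ∧ z ^ nn = 1 :=
        ⟨orderOf z, orderOf_pos z, pow_orderOf_eq_one z⟩
      have hmkg : (QuotientGroup.mk (g.val) : PGL 3) = z.val := hL z.val
      have h4 : (QuotientGroup.mk (g.val ^ nn) : PGL 3) = 1 := by
        calc (QuotientGroup.mk (g.val ^ nn) : PGL 3)
            = (QuotientGroup.mk g.val : PGL 3)^nn :=
              map_pow (QuotientGroup.mk' (Subgroup.center GL3)) g.val nn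
        _ = (z.val)^nn := by rw [hmkg]
        _ = ((z^nn : ↥B) : PGL 3) := by norm_cast
        _ = 1 := by rw [hznn]; rfl
      have h6 : g.val ^ nn ∈ Subgroup.center GL3 := (QuotientGroup.eq_one_iff _).mp h4
      obtain ⟨c, hc⟩ := PGLAux.mem_center_GL3_iff.mp h6
      have h7 : (f g) ^ nn = (c:ℂ) • (1 : Module.End ℂ V3) := by
        have h8 : ((g.val ^ nn).val : M3) = (g.val.val)^nn := Units.val_pow_eq_pow_val _ _
        calc (f g)^nn = PGLAux2.ee ((g.val.val)^nn) := by rw [hf, map_pow]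
        _ = PGLAux2.ee ((g.val^nn).val) := by rw [h8]
        _ = PGLAux2.ee ((c:ℂ) • (1:M3)) := by rw [hc]
        _ = (c:ℂ) • 1 := by rw [_root_.map_smul, _root_.map_one]
      have h9 : f g = s • 1 := PGLAux3.unipotent_order hsne hNnil hnn h7
      have h10 : g.val ∈ Subgroup.center GL3 := by
        apply PGLAux.mem_center_GL3_iff.mpr
        refine ⟨Units.mk0 s hsne, ?_⟩
        apply (PGLAux2.ee).injective
        rw [_root_.map_smul, _root_.map_one]
        exact h9
      have h11 : z.val = 1 := by
        rw [← hL z.val, QuotientGroup.eq_one_iff]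
        exact h10
      exact Subtype.ext h11
    intro a b hab
    have h5 : a * b⁻¹ = 1 := hker _ (by rw [_root_.map_mul, _root_.map_inv, hab, mul_inv_cancel])
    exact mul_inv_eq_one.mp h5
  · -- CASE 2
    push_neg at hcase
    obtain ⟨P, Q, hP, hQ, hPQ⟩ := hcase
    obtain ⟨ω, hω, hω3⟩ := hpair P Q hP hQ
    have hω1 : ω ≠ 1 := by
      intro h
      apply hPQ
      apply Units.ext
      rw [h, show ((1:ℂˣ):ℂ) = 1 from rfl, one_smul] at hω
      exact hω
    have hu1ex : ∀ z : ↥B, ∃ u : ℂˣ,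
        (((L z.val) * P).val : M3) = (u:ℂ) • ((P * (L z.val)).val) ∧ u^3 = 1 :=
      fun z => hpair (L z.val) P (hmkB z) hP
    have hu2ex : ∀ z : ↥B, ∃ u : ℂˣ,
        (((L z.val) * Q).val : M3) = (u:ℂ) • ((Q * (L z.val)).val) ∧ u^3 = 1 :=
      fun z => hpair (L z.val) Q (hmkB z) hQ
    set u1 : ↥B → ℂˣ := fun z => (hu1ex z).choose with hu1def
    set u2 : ↥B → ℂˣ := fun z => (hu2ex z).choose with hu2def
    have hu1 : ∀ z, (((L z.val) * P).val : M3) = ((u1 z : ℂˣ):ℂ) • ((P * (L z.val)).val) :=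
      fun z => (hu1ex z).choose_spec.1
    have hu2 : ∀ z, (((L z.val) * Q).val : M3) = ((u2 z : ℂˣ):ℂ) • ((Q * (L z.val)).val) :=
      fun z => (hu2ex z).choose_spec.1
    have huniq : ∀ (A C : GL3) (u v : ℂˣ), ((A*C).val : M3) = (u:ℂ)•((C*A).val) →
        ((A*C).val : M3) = (v:ℂ)•((C*A).val) → u = v := by
      intro A C u v h1 h2
      exact PGLAux.units_smul_cancel (PGLAux.unit_matrix_ne_zero (C*A)) (by rw [← h1, h2])
    have hmul : ∀ (C : GL3), QuotientGroup.mk C ∈ B →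
        ∀ (uu : ↥B → ℂˣ),
        (∀ z, (((L z.val) * C).val : M3) = ((uu z : ℂˣ):ℂ) • ((C * (L z.val)).val)) →
        ∀ y z : ↥B, uu (y*z) = uu y * uu z := by
      intro C hC uu huu y z
      apply huniq (L ((y*z) : ↥B).val) C
      · exact huu (y*z)
      · have hmkeq : (QuotientGroup.mk ((L y.val) * (L z.val)) : PGL 3)
            = QuotientGroup.mk (L ((y*z):↥B).val) := by
          rw [QuotientGroup.mk_mul, hL, hL, hL]
          rfl
        have hy' : ((L y.val).val * C.val : M3) = (uu y : ℂ) • (C.val * (L y.val).val) := by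
          have := huu y; rwa [Units.val_mul, Units.val_mul] at this
        have hz' : ((L z.val).val * C.val : M3) = (uu z : ℂ) • (C.val * (L z.val).val) := by
          have := huu z; rwa [Units.val_mul, Units.val_mul] at this
        have hprod := PGLAux.mat_pair_mul hy' hz'
        have hGL : (((L y.val * L z.val) * C).val : M3)
            = ((uu y * uu z : ℂˣ):ℂ) • ((C * (L y.val * L z.val)).val) := by
          rw [Units.val_mul, Units.val_mul, Units.val_mul, Units.val_mul, Units.val_mul]
          exact hprod
        exact PGLAux.pair_transfer hmkeq hGL
    have hmul1 := hmul P hP u1 hu1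
    have hmul2 := hmul Q hQ u2 hu2
    set φ : ↥B →* (Fin 2 → ℂˣ) := MonoidHom.mk' (fun z => ![u1 z, u2 z]) (by
      intro y z
      funext i
      fin_cases i
      · exact hmul1 y z
      · exact hmul2 y z) with hφdef
    refine ⟨2, by norm_num, φ, ?_⟩
    have hker : ∀ z : ↥B, φ z = 1 → z = 1 := by
      intro z hz
      have h1 : u1 z = 1 := congrFun hz 0
      have h2 : u2 z = 1 := congrFun hz 1
      have hc1 : ((L z.val).val * P.val : M3) = P.val * (L z.val).val := by
        have h3 := hu1 z
        rw [h1] at h3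
        rw [Units.val_mul, Units.val_mul] at h3
        simpa using h3
      have hc2 : ((L z.val).val * Q.val : M3) = Q.val * (L z.val).val := by
        have h3 := hu2 z
        rw [h2] at h3
        rw [Units.val_mul, Units.val_mul] at h3
        simpa using h3
      have hXY : (P.val * Q.val : M3) = (ω:ℂ) • (Q.val * P.val) := by
        have h3 := hω
        rwa [Units.val_mul, Units.val_mul] at h3
      have hω3' : ((ω:ℂ))^3 = 1 := by
        have h3 := congrArg (Units.val) hω3
        push_cast at h3
        exact h3
      have hω1' : (ω:ℂ) ≠ 1 := fun h => hω1 (Units.ext (by push_cast; exact h))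
      obtain ⟨c, hc0, hceq⟩ := PGLAux2.core2 P Q (L z.val) (ω:ℂ) hω1' hω3' hXY hc1 hc2
      have hcen : L z.val ∈ Subgroup.center GL3 :=
        PGLAux.mem_center_GL3_iff.mpr ⟨Units.mk0 c hc0, by simpa using hceq⟩
      have h4 : z.val = 1 := by
        rw [← hL z.val, QuotientGroup.eq_one_iff]
        exact hcen
      exact Subtype.ext h4
    intro a b hab
    have h5 : a * b⁻¹ = 1 := hker _ (by rw [_root_.map_mul, _root_.map_inv, hab, mul_inv_cancel])
    exact mul_inv_eq_one.mp h5
end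

section
/- Let p be a prime and G a group of order pⁿ, and let p^a be the maximal order of an abelian normal subgroup of G. Then 2n ≤ a(a+1). -/
open Subgroup MulAction
open scoped Pointwise

section Aux

variable {G : Type*} [Group G]

/-- Key step: in a finite `p`-group, if `T < N` are normal subgroups, there is
`x ∈ N \ T` with `x ^ p ∈ T` whose commutator with every element lies in `T`. -/
lemma suzuki_step {p : ℕ} [Fact p.Prime] [Finite G] (hpg : IsPGroup p G)
    (N T : Subgroup G) (hN : N.Normal) (hT : T.Normal) (hlt : T < N) :
    ∃ x : G, x ∈ N ∧ x ∉ T ∧ x ^ p ∈ T ∧ ∀ g : G, g * x * g⁻¹ * x⁻¹ ∈ T := by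
  classical
  set Q := G ⧸ T with hQdef
  let π : G →* Q := QuotientGroup.mk' T
  have hπsurj : Function.Surjective π := QuotientGroup.mk'_surjective T
  have hQ : IsPGroup p Q := hpg.to_quotient T
  set N' : Subgroup Q := N.map π with hN'def
  haveI hN'norm : N'.Normal := hN.map π hπsurj
  obtain ⟨y, hyN, hyT⟩ := SetLike.exists_of_lt hlt
  have hy1 : π y ≠ 1 := fun h => hyT ((QuotientGroup.eq_one_iff y).mp h)
  have hyN' : π y ∈ N' := Subgroup.mem_map_of_mem π hyN
  -- `p` divides the cardinality of `N'`
  have hN'card : p ∣ Nat.card N' := by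
    obtain ⟨k, hk⟩ := IsPGroup.iff_card.mp (hQ.to_subgroup N')
    rcases k with _ | k
    · exfalso
      have : N' = ⊥ := by
        have h1 : Nat.card N' = 1 := by simpa using hk
        exact Subgroup.eq_bot_of_card_eq N' h1
      rw [this] at hyN'
      exact hy1 (Subgroup.mem_bot.mp hyN')
    · rw [hk]
      exact dvd_pow_self p k.succ_ne_zero
  -- conjugation action of Q on N'
  letI : MulAction Q N' := MulAction.compHom _ (MulAut.conjNormal (H := N'))
  have hsmul : ∀ (q : Q) (z : N'), ((q • z : N') : Q) = q * z * q⁻¹ := fun q z =>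
    MulAut.conjNormal_apply q z
  have h1fix : (1 : N') ∈ fixedPoints Q N' := by
    intro q
    have : ((q • (1 : N') : N') : Q) = q * 1 * q⁻¹ := hsmul q 1
    have h2 : ((q • (1 : N') : N') : Q) = 1 := by rw [this]; group
    exact Subtype.ext h2
  obtain ⟨b, hbfix, hb1⟩ :=
    hQ.exists_fixed_point_of_prime_dvd_card_of_fixed_point N' hN'card h1fix
  -- b is a nontrivial element of N' centralized by all of Q
  have hbcen : ∀ q : Q, q * (b : Q) * q⁻¹ = (b : Q) := by
    intro q
    have := hbfix q
    calc q * (b : Q) * q⁻¹ = ((q • b : N') : Q) := (hsmul q b).symm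
      _ = (b : Q) := by rw [this]
  have hbne : (b : Q) ≠ 1 := by
    intro h
    exact hb1 (Subtype.ext (by simpa using h)).symm
  -- replace b by a power of order p
  obtain ⟨j, hj⟩ := (IsPGroup.iff_orderOf.mp hQ) (b : Q)
  have hj1 : j ≠ 0 := by
    rintro rfl
    rw [pow_zero] at hj
    exact hbne (orderOf_eq_one_iff.mp hj)
  set w : Q := (b : Q) ^ (p ^ (j - 1)) with hwdef
  have hwp : w ^ p = 1 := by
    rw [hwdef, ← pow_mul, ← pow_succ]
    have : j - 1 + 1 = j := Nat.succ_pred_eq_of_pos (Nat.pos_of_ne_zero hj1)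
    rw [this, ← hj, pow_orderOf_eq_one]
  have hwne : w ≠ 1 := by
    intro h
    have hdvd : orderOf (b : Q) ∣ p ^ (j - 1) := orderOf_dvd_of_pow_eq_one h
    rw [hj] at hdvd
    have := (Nat.pow_dvd_pow_iff_le_right (Fact.out (p := p.Prime)).one_lt).mp hdvd
    omega
  have hwN' : w ∈ N' := pow_mem b.2 _
  have hwcen : ∀ q : Q, q * w * q⁻¹ = w := by
    intro q
    rw [hwdef, ← conj_pow, hbcen]
  -- lift w to G
  obtain ⟨x, hxN, hxw⟩ := Subgroup.mem_map.mp hwN'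
  refine ⟨x, hxN, ?_, ?_, ?_⟩
  · intro hxT
    apply hwne
    rw [← hxw]
    exact (QuotientGroup.eq_one_iff x).mpr hxT
  · have : π (x ^ p) = 1 := by rw [map_pow, hxw, hwp]
    exact (QuotientGroup.eq_one_iff _).mp this
  · intro g
    have : π (g * x * g⁻¹ * x⁻¹) = 1 := by
      rw [map_mul, map_mul, map_mul, map_inv, map_inv, hxw, hwcen (π g)]
      group
    exact (QuotientGroup.eq_one_iff _).mp this

lemma suzuki_normal_sup_zpowers (T : Subgroup G) (hT : T.Normal) {x : G}
    (hcomm : ∀ g : G, g * x * g⁻¹ * x⁻¹ ∈ T) : (T ⊔ zpowers x).Normal := by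
  constructor
  intro y hy g
  have hy' : y ∈ (T : Set G) * (zpowers x : Set G) := by
    rw [← Subgroup.normal_mul]; exact hy
  obtain ⟨t, ht, z, hz, rfl⟩ := hy'
  obtain ⟨k, rfl⟩ := Subgroup.mem_zpowers_iff.mp hz
  have h1 : g * (t * x ^ k) * g⁻¹ = (g * t * g⁻¹) * (g * x ^ k * g⁻¹) := by group
  rw [h1]
  have h2 : g * t * g⁻¹ ∈ T ⊔ zpowers x := le_sup_left (α := Subgroup G) (hT.conj_mem t ht g)
  have hgx : g * x * g⁻¹ ∈ T ⊔ zpowers x := by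
    have : g * x * g⁻¹ = (g * x * g⁻¹ * x⁻¹) * x := by group
    rw [this]
    exact mul_mem (le_sup_left (α := Subgroup G) (hcomm g))
      (le_sup_right (α := Subgroup G) (Subgroup.mem_zpowers x))
  have h3 : g * x ^ k * g⁻¹ ∈ T ⊔ zpowers x := by
    rw [← conj_zpow]
    exact zpow_mem hgx k
  exact mul_mem h2 h3

lemma suzuki_card_sup_zpowers [Finite G] {p : ℕ} [Fact p.Prime] (T : Subgroup G)
    (hT : T.Normal) {x : G} (hx : x ∉ T) (hxp : x ^ p ∈ T) :
    Nat.card ↥(T ⊔ zpowers x) = p * Nat.card T := by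
  classical
  set T' := T ⊔ zpowers x with hT'def
  have hle : T ≤ T' := le_sup_left
  have hxT' : x ∈ T' := le_sup_right (α := Subgroup G) (Subgroup.mem_zpowers x)
  set S : Subgroup T' := T.subgroupOf T' with hSdef
  haveI hSnorm : S.Normal := hT.subgroupOf T'
  have hcard : Nat.card T' = Nat.card (T' ⧸ S) * Nat.card S :=
    Subgroup.card_eq_card_quotient_mul_card_subgroup S
  have hScard : Nat.card S = Nat.card T :=
    Nat.card_congr (Subgroup.subgroupOfEquivOfLe hle).toEquiv
  set ξ : T' := ⟨x, hxT'⟩ with hξdef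
  set xbar : T' ⧸ S := QuotientGroup.mk ξ with hxbardef
  have hxbar_p : xbar ^ p = 1 := by
    rw [hxbardef, ← QuotientGroup.mk_pow, QuotientGroup.eq_one_iff]
    exact Subgroup.mem_subgroupOf.mpr (by simpa using hxp)
  have hxbar_ne : xbar ≠ 1 := by
    rw [hxbardef, Ne, QuotientGroup.eq_one_iff]
    intro h
    exact hx (Subgroup.mem_subgroupOf.mp h)
  have horder : orderOf xbar = p := orderOf_eq_prime hxbar_p hxbar_ne
  have htop : zpowers xbar = (⊤ : Subgroup (T' ⧸ S)) := by
    rw [eq_top_iff']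
    intro q
    induction q using QuotientGroup.induction_on with
    | H z =>
      obtain ⟨yv, hyv⟩ := z
      have hyv' : yv ∈ (T : Set G) * (zpowers x : Set G) := by
        rw [← Subgroup.normal_mul]; exact hyv
      obtain ⟨t, ht, zz, hzz, rfl⟩ := hyv'
      obtain ⟨k, rfl⟩ := Subgroup.mem_zpowers_iff.mp hzz
      have hteq : (⟨t * x ^ k, hyv⟩ : T') = ⟨t, hle ht⟩ * ξ ^ k := by
        apply Subtype.ext
        simp [hξdef]
      rw [hteq, QuotientGroup.mk_mul, QuotientGroup.mk_zpow]
      have ht1 : (QuotientGroup.mk (⟨t, hle ht⟩ : T') : T' ⧸ S) = 1 := by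
        rw [QuotientGroup.eq_one_iff]
        exact Subgroup.mem_subgroupOf.mpr (by simpa using ht)
      rw [ht1, one_mul]
      exact zpow_mem (Subgroup.mem_zpowers xbar) k
  have hQcard : Nat.card (T' ⧸ S) = p := by
    have h1 : Nat.card (zpowers xbar) = p := by rw [Nat.card_zpowers, horder]
    have h2 : Nat.card (zpowers xbar) = Nat.card (T' ⧸ S) := by
      rw [htop, Subgroup.card_top]
    rw [← h2, h1]
  rw [hcard, hScard, hQcard]

end Aux

theorem suzuki_abelian_normal_subgroup_bound {G : Type*} [Group G]
    {p : ℕ} (hp : p.Prime) {n a : ℕ} (hG : Nat.card G = p ^ n)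
    (A : Subgroup G) (hAnorm : A.Normal) (hAcomm : IsMulCommutative A)
    (hA : Nat.card A = p ^ a)
    (hmax : ∀ B : Subgroup G, B.Normal → IsMulCommutative B → Nat.card B ≤ p ^ a) :
    2 * n ≤ a * (a + 1) := by
  classical
  haveI : Fact p.Prime := ⟨hp⟩
  haveI : Finite G := Nat.finite_of_card_ne_zero (by rw [hG]; exact (pow_pos hp.pos n).ne')
  haveI := hAcomm
  have hpg : IsPGroup p G := IsPGroup.of_card hG
  -- Step 1: the centralizer of A is A itself.
  have hCnorm : (centralizer (A : Set G)).Normal := by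
    constructor
    intro c hc g
    rw [Subgroup.mem_centralizer_iff] at hc ⊢
    intro y hy
    have hz : g⁻¹ * y * g ∈ A := by
      have := hAnorm.conj_mem y hy g⁻¹
      simpa using this
    have hzc := hc _ hz
    calc y * (g * c * g⁻¹) = g * ((g⁻¹ * y * g) * c) * g⁻¹ := by group
      _ = g * (c * (g⁻¹ * y * g)) * g⁻¹ := by rw [hzc]
      _ = (g * c * g⁻¹) * y := by group
  have hcent : centralizer (A : Set G) ≤ A := by
    by_contra hc
    have hle : A ≤ centralizer (A : Set G) := Subgroup.le_centralizer A
    have hlt : A < centralizer (A : Set G) := lt_of_le_of_ne hle (by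
      intro h
      exact hc (le_of_eq h.symm))
    obtain ⟨x, hxC, hxA, _, hcomm⟩ := suzuki_step hpg _ A hCnorm hAnorm hlt
    set B := A ⊔ zpowers x with hBdef
    have hBnorm : B.Normal := suzuki_normal_sup_zpowers A hAnorm hcomm
    have hBcomm : IsMulCommutative B := by
      rw [← Subgroup.le_centralizer_iff_isMulCommutative]
      refine sup_le ?_ ?_
      · rw [Subgroup.le_centralizer_iff]
        refine sup_le hle ?_
        rw [zpowers_le]
        exact hxC
      · rw [Subgroup.le_centralizer_iff]
        refine sup_le ?_ ?_
        · rw [Subgroup.le_centralizer_iff, zpowers_le]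
          exact hxC
        · rw [Subgroup.le_centralizer_iff_isMulCommutative]
          infer_instance
    have hcard := hmax B hBnorm hBcomm
    have hAB : A = B := Subgroup.eq_of_le_of_card_ge le_sup_left (by rw [hA]; exact hcard)
    exact hxA (hAB ▸ le_sup_right (α := Subgroup G) (Subgroup.mem_zpowers x))
  -- Step 2: main induction building a chain from ⊥ to A.
  have claim : ∀ d m (T : Subgroup G), T.Normal → T ≤ A → Nat.card T = p ^ m → m + d = a →
      Nat.card (centralizer (T : Set G)) * p ^ (m.choose 2) ≤
        Nat.card (centralizer (A : Set G)) * p ^ (a.choose 2) := by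
    intro d
    induction d with
    | zero =>
      intro m T hTn hTA hTcard hma
      have hm : m = a := by omega
      subst hm
      have hTA' : T = A := Subgroup.eq_of_le_of_card_ge hTA (by rw [hTcard, hA])
      subst hTA'
      exact le_refl _
    | succ d ih =>
      intro m T hTn hTA hTcard hma
      have hTltA : T < A := by
        refine lt_of_le_of_ne hTA ?_
        rintro rfl
        rw [hA] at hTcard
        have := Nat.pow_right_injective hp.two_le hTcard.symm
        omega
      obtain ⟨x, hxA, hxT, hxp, hcomm⟩ := suzuki_step hpg A T hAnorm hTn hTltA
      set T' := T ⊔ zpowers x with hT'def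
      have hT'n : T'.Normal := suzuki_normal_sup_zpowers T hTn hcomm
      have hT'A : T' ≤ A := sup_le hTA (zpowers_le.mpr hxA)
      have hT'card : Nat.card T' = p ^ (m + 1) := by
        rw [suzuki_card_sup_zpowers T hTn hxT hxp, hTcard, pow_succ']
      -- the counting homomorphism from the centralizer of T to T
      have step2 : Nat.card (centralizer (T : Set G)) ≤
          Nat.card (centralizer (T' : Set G)) * p ^ m := by
        set C := centralizer (T : Set G) with hCdef
        set C' := centralizer (T' : Set G) with hC'def
        have hmemC : ∀ g : C, ∀ t ∈ T, t * (g : G) = (g : G) * t := fun g =>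
          Subgroup.mem_centralizer_iff.mp g.2
        let f : C →* T := {
          toFun := fun g => ⟨(g : G) * x * (g : G)⁻¹ * x⁻¹, hcomm (g : G)⟩
          map_one' := by
            apply Subtype.ext
            simp
          map_mul' := by
            intro g h
            apply Subtype.ext
            have hu : (h : G) * x * (h : G)⁻¹ * x⁻¹ ∈ T := hcomm (h : G)
            have hgu : ((h : G) * x * (h : G)⁻¹ * x⁻¹) * (g : G) =
                (g : G) * ((h : G) * x * (h : G)⁻¹ * x⁻¹) := hmemC g _ hu
            have key : ((g : G) * (h : G)) * x * ((g : G) * (h : G))⁻¹ * x⁻¹ =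
                ((h : G) * x * (h : G)⁻¹ * x⁻¹) * ((g : G) * x * (g : G)⁻¹ * x⁻¹) := by
              have : ((g : G) * (h : G)) * x * ((g : G) * (h : G))⁻¹ * x⁻¹ =
                  ((g : G) * (((h : G) * x * (h : G)⁻¹ * x⁻¹)) * (g : G)⁻¹) *
                    ((g : G) * x * (g : G)⁻¹ * x⁻¹) := by group
              rw [this, ← hgu]
              group
            have hcommT : ((h : G) * x * (h : G)⁻¹ * x⁻¹) * ((g : G) * x * (g : G)⁻¹ * x⁻¹) =
                ((g : G) * x * (g : G)⁻¹ * x⁻¹) * ((h : G) * x * (h : G)⁻¹ * x⁻¹) :=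
              Subgroup.mul_comm_of_mem_isMulCommutative A (hTA hu) (hTA (hcomm (g : G)))
            simp only [Subgroup.coe_mul]
            rw [key, hcommT]
        }
        have hker : ∀ k : C, k ∈ f.ker → (k : G) ∈ C' := by
          intro k hk
          have hk1 : (k : G) * x * (k : G)⁻¹ * x⁻¹ = 1 := by
            have h0 : ((f k : ↥T) : G) = ((1 : ↥T) : G) :=
              congrArg Subtype.val (MonoidHom.mem_ker.mp hk)
            exact h0
          have hkx : x * (k : G) = (k : G) * x := by
            have h2 : (k : G) * x * (k : G)⁻¹ = x := by
              calc (k : G) * x * (k : G)⁻¹ = ((k : G) * x * (k : G)⁻¹ * x⁻¹) * x := by group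
                _ = x := by rw [hk1]; group
            calc x * (k : G) = (k : G) * ((k : G)⁻¹ * x * (k : G)) := by group
              _ = (k : G) * x := by
                  congr 1
                  calc (k : G)⁻¹ * x * (k : G) = (k : G)⁻¹ * ((k : G) * x * (k : G)⁻¹) * (k : G) := by
                        rw [h2]
                    _ = x := by group
          rw [hC'def, Subgroup.mem_centralizer_iff]
          intro h hh
          have hh' : h ∈ (T : Set G) * (zpowers x : Set G) := by
            rw [← Subgroup.normal_mul]; exact hh
          obtain ⟨t, ht, z, hz, rfl⟩ := hh'
          obtain ⟨i, rfl⟩ := Subgroup.mem_zpowers_iff.mp hz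
          have h1 : t * (k : G) = (k : G) * t := hmemC k t ht
          have h2 : x ^ i * (k : G) = (k : G) * x ^ i := by
            have hc : Commute x (k : G) := hkx
            exact (hc.zpow_left i).eq
          calc t * x ^ i * (k : G) = t * ((k : G) * x ^ i) := by rw [mul_assoc, h2]
            _ = (t * (k : G)) * x ^ i := by group
            _ = (k : G) * (t * x ^ i) := by rw [h1]; group
        -- cardinality bookkeeping
        have hC : Nat.card C = Nat.card (C ⧸ f.ker) * Nat.card f.ker :=
          Subgroup.card_eq_card_quotient_mul_card_subgroup f.ker
        have hQle : Nat.card (C ⧸ f.ker) ≤ p ^ m := by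
          have e : Nat.card (C ⧸ f.ker) = Nat.card f.range :=
            Nat.card_congr (QuotientGroup.quotientKerEquivRange f).toEquiv
          rw [e, ← hTcard]
          have : Nat.card f.range ≤ Nat.card (⊤ : Subgroup T) :=
            Subgroup.card_le_of_le le_top
          rwa [Subgroup.card_top] at this
        have hkle : Nat.card f.ker ≤ Nat.card C' := by
          have hinj : Function.Injective (fun k : f.ker => (⟨((k : C) : G), hker k k.2⟩ : C')) := by
            intro k1 k2 h
            have h' : ((k1 : ↥C) : G) = ((k2 : ↥C) : G) :=
              congrArg (fun z : ↥C' => (z : G)) h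
            exact Subtype.ext (Subtype.ext h')
          exact Nat.card_le_card_of_injective _ hinj
        calc Nat.card C = Nat.card (C ⧸ f.ker) * Nat.card f.ker := hC
          _ ≤ p ^ m * Nat.card C' := Nat.mul_le_mul hQle hkle
          _ = Nat.card C' * p ^ m := Nat.mul_comm _ _
      have hchoose : m + m.choose 2 = (m + 1).choose 2 := by
        rw [Nat.choose_succ_succ, Nat.choose_one_right]
      calc Nat.card (centralizer (T : Set G)) * p ^ (m.choose 2)
          ≤ (Nat.card (centralizer (T' : Set G)) * p ^ m) * p ^ (m.choose 2) :=
            Nat.mul_le_mul_right _ step2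
        _ = Nat.card (centralizer (T' : Set G)) * p ^ ((m + 1).choose 2) := by
            rw [mul_assoc, ← pow_add, hchoose]
        _ ≤ Nat.card (centralizer (A : Set G)) * p ^ (a.choose 2) :=
            ih (m + 1) T' hT'n hT'A hT'card (by omega)
  -- Apply the claim with T = ⊥.
  have hbotcent : centralizer (((⊥ : Subgroup G) : Set G)) = ⊤ := by
    rw [eq_top_iff]
    intro g _
    rw [Subgroup.mem_centralizer_iff]
    intro h hh
    rw [Subgroup.coe_bot, Set.mem_singleton_iff] at hh
    subst hh
    group
  have hfinal := claim a 0 ⊥ inferInstance bot_le (by simp) (by omega)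
  rw [hbotcent, Subgroup.card_top] at hfinal
  have hCA : centralizer (A : Set G) = A := le_antisymm hcent (Subgroup.le_centralizer A)
  rw [hCA, hA] at hfinal
  have hc0 : Nat.choose 0 2 = 0 := rfl
  rw [hc0, pow_zero, mul_one] at hfinal
  have hpow : p ^ n ≤ p ^ (a + a.choose 2) := by
    rw [← hG, pow_add]
    simpa using hfinal
  have hn : n ≤ a + a.choose 2 := (Nat.pow_le_pow_iff_right hp.one_lt).mp hpow
  have htri : ∀ k : ℕ, 2 * k.choose 2 + 2 * k = k * (k + 1) := by
    intro k
    induction k with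
    | zero => simp
    | succ b ihb =>
      calc 2 * (b + 1).choose 2 + 2 * (b + 1)
          = (2 * b.choose 2 + 2 * b) + 2 * (b + 1) := by
            rw [Nat.choose_succ_succ, Nat.choose_one_right]; ring
        _ = b * (b + 1) + 2 * (b + 1) := by rw [ihb]
        _ = (b + 1) * (b + 1 + 1) := by ring
  have := htri a
  omega
end
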